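/- arXiv:1801.07858 — 3 statements merged into one kernel-verified Lean document; each statement's English description precedes it below -/
import Mathlib

section
/- There exists a constant C_d > 0 depending only on d such that for every probability measure μ on 𝕋^d, every continuous function a on 𝕋^d, every eigenbasis (ψ_j)_{j≥1} of L²(𝕋^d), and every λ > 0, one has (1/N(λ)) · ∑_{j : λ_j ≤ λ} |∫_{𝕋^d} a|ψ_j|² dμ − ∫_{𝕋^d} a dμ|² ≤ (C_d/λ) · ∑_{n ∈ ℤ^d, 1 ≤ ‖n‖ ≤ 2λ} |∫_{𝕋^d} a(x) e^{−i⟨n,x⟩} dμ(x)|² / ‖n̂‖. -/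
open MeasureTheory Real BigOperators ComplexConjugate

noncomputable section

instance : Fact (0 < 2 * π) := ⟨by positivity⟩

/-- The flat torus `𝕋^d = ℝ^d/(2πℤ)^d`. -/
abbrev Td (d : ℕ) := Fin d → AddCircle (2 * π)

/-- The normalized Haar probability measure on the flat torus. -/
def haarT (d : ℕ) : Measure (Td d) :=
  Measure.pi fun _ : Fin d => AddCircle.haarAddCircle

/-- The character `e_k(x) = e^{i⟨k,x⟩}` for `k ∈ ℤ^d`. -/
def eChar {d : ℕ} (k : Fin d → ℤ) (x : Td d) : ℂ := ∏ i, fourier (k i) (x i)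

/-- Euclidean norm of a lattice point of `ℤ^d`. -/
def znorm {d : ℕ} (k : Fin d → ℤ) : ℝ := Real.sqrt (∑ i, ((k i : ℝ)) ^ 2)

/-- The primitive lattice point `n̂` generating `n ≠ 0`: divide out the gcd of coordinates. -/
def primPart {d : ℕ} (n : Fin d → ℤ) : Fin d → ℤ := fun i => n i / Finset.univ.gcd n

/-- Fourier coefficient `â_n = ∫ a(x) e^{-i⟨n,x⟩} dx` of `a ∈ L²(𝕋^d)`. -/
def fcoef {d : ℕ} (a : Td d → ℂ) (n : Fin d → ℤ) : ℂ :=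
  ∫ x, a x * conj (eChar n x) ∂(haarT d)

/-- Fourier transform `μ̂(n) = ∫ e^{-i⟨n,x⟩} dμ(x)` of a measure on `𝕋^d`. -/
def muF {d : ℕ} (μ : Measure (Td d)) (n : Fin d → ℤ) : ℂ :=
  ∫ x, conj (eChar n x) ∂μ

/-- `N(λ) = #{k ∈ ℤ^d : ‖k‖ ≤ λ}`, the spectral counting function. -/
def latticeCount (d : ℕ) (lam : ℝ) : ℕ := Set.ncard {k : Fin d → ℤ | znorm k ≤ lam}

/-- An eigenbasis of `L²(𝕋^d)`: an orthonormal basis `(ψ_j)` of Laplace eigenfunctions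
`ψ_j = ∑_{‖k‖ = Λ j} c_j(k) e_k`, with nondecreasing eigenvalues `(Λ j)²` (nonnegative
integers), orthonormality and completeness expressed via the Fourier coefficients. -/
structure Eigenbasis (d : ℕ) where
  ψ : ℕ → Td d → ℂ
  Λ : ℕ → ℝ
  c : ℕ → (Fin d → ℤ) → ℂ
  nonneg : ∀ j, 0 ≤ Λ j
  mono : Monotone Λ
  eig_int : ∀ j, ∃ E : ℕ, Λ j ^ 2 = E
  repr : ∀ j x, ψ j x = ∑' k : Fin d → ℤ, c j k * eChar k x
  supp : ∀ j k, c j k ≠ 0 → znorm k = Λ j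
  ortho : ∀ i j, ∑' k : Fin d → ℤ, c i k * conj (c j k) = if i = j then 1 else 0
  complete : ∀ k l : Fin d → ℤ, ∑' j : ℕ, c j k * conj (c j l) = if k = l then 1 else 0

/-- A function on the torus is smooth if its `(2πℤ)^d`-periodic lift to `ℝ^d` is `C^∞`. -/
def SmoothOnTorus {d : ℕ} (a : Td d → ℂ) : Prop :=
  ContDiff ℝ (⊤ : ℕ∞) fun x : Fin d → ℝ => a fun i => (x i : AddCircle (2 * π))

namespace QV

variable {d : ℕ}

def box (d : ℕ) (K : ℤ) : Finset (Fin d → ℤ) := Fintype.piFinset fun _ => Finset.Icc (-K) K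

lemma mem_box {K : ℤ} {k : Fin d → ℤ} : k ∈ box d K ↔ ∀ i, |k i| ≤ K := by
  simp [box, Fintype.mem_piFinset, abs_le]

lemma znorm_nonneg (k : Fin d → ℤ) : 0 ≤ znorm k := Real.sqrt_nonneg _

lemma znorm_sq (k : Fin d → ℤ) : znorm k ^ 2 = ∑ i, ((k i : ℝ)) ^ 2 :=
  Real.sq_sqrt (by positivity)

lemma abs_coord_le_znorm (k : Fin d → ℤ) (i : Fin d) : |(k i : ℝ)| ≤ znorm k := by
  rw [znorm, ← Real.sqrt_sq_eq_abs]
  exact Real.sqrt_le_sqrt (Finset.single_le_sum (f := fun i => ((k i : ℝ)) ^ 2)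
    (fun i _ => sq_nonneg _) (Finset.mem_univ i))

def toE (k : Fin d → ℤ) : EuclideanSpace ℝ (Fin d) := WithLp.toLp 2 (fun i => (k i : ℝ))

lemma znorm_eq_norm (k : Fin d → ℤ) : znorm k = ‖toE k‖ := by
  rw [EuclideanSpace.norm_eq, znorm]
  have h : ∀ i, ‖toE k i‖ ^ 2 = ((k i : ℝ)) ^ 2 := fun i => by
    simp [toE, Real.norm_eq_abs, sq_abs]
  rw [Finset.sum_congr rfl fun i _ => h i]

lemma znorm_sub_le (l k : Fin d → ℤ) : znorm (l - k) ≤ znorm l + znorm k := by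
  have h : toE (l - k) = toE l - toE k := by
    ext i
    simp [toE]
  rw [znorm_eq_norm, znorm_eq_norm, znorm_eq_norm, h]
  exact norm_sub_le _ _

lemma znorm_zero : znorm (0 : Fin d → ℤ) = 0 := by simp [znorm]

lemma one_le_znorm {n : Fin d → ℤ} (h : n ≠ 0) : 1 ≤ znorm n := by
  obtain ⟨i, hi⟩ : ∃ i, n i ≠ 0 := by
    by_contra hc; push_neg at hc; exact h (funext hc)
  have h1 : (1 : ℝ) ≤ |(n i : ℝ)| := by
    have := Int.one_le_abs hi
    rw [← Int.cast_abs]; exact_mod_cast this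
  exact h1.trans (abs_coord_le_znorm n i)

lemma znorm_eq_iff {k l : Fin d → ℤ} :
    znorm k = znorm l ↔ (∑ i, (k i) ^ 2 : ℤ) = ∑ i, (l i) ^ 2 := by
  rw [znorm, znorm, Real.sqrt_inj (by positivity) (by positivity)]
  constructor
  · intro h
    exact_mod_cast (by push_cast; exact h : ((∑ i, (k i) ^ 2 : ℤ) : ℝ) = ((∑ i, (l i) ^ 2 : ℤ) : ℝ))
  · intro h
    have : ((∑ i, (k i) ^ 2 : ℤ) : ℝ) = ((∑ i, (l i) ^ 2 : ℤ) : ℝ) := by exact_mod_cast h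
    push_cast at this; exact this

/-- eChar lemmas -/
lemma eChar_continuous (k : Fin d → ℤ) : Continuous (eChar k) := by
  refine continuous_finset_prod _ fun i _ => ?_
  exact (map_continuous (fourier (k i))).comp (continuous_apply i)

lemma eChar_zero (x : Td d) : eChar (0 : Fin d → ℤ) x = 1 := by
  simp [eChar, fourier_zero]

lemma eChar_conj (k : Fin d → ℤ) (x : Td d) : conj (eChar k x) = eChar (-k) x := by
  simp only [eChar, map_prod]
  exact Finset.prod_congr rfl fun i _ => by rw [Pi.neg_apply, fourier_neg]

lemma eChar_mul_conj (k l : Fin d → ℤ) (x : Td d) :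
    eChar k x * conj (eChar l x) = eChar (k - l) x := by
  rw [eChar_conj]
  simp only [eChar, ← Finset.prod_mul_distrib]
  refine Finset.prod_congr rfl fun i _ => ?_
  rw [Pi.neg_apply, Pi.sub_apply, sub_eq_add_neg, fourier_add]

lemma integrable_cont {f : Td d → ℂ} (hf : Continuous f) (μ : Measure (Td d))
    [IsFiniteMeasure μ] : Integrable f μ :=
  hf.integrable_of_hasCompactSupport (HasCompactSupport.of_compactSpace f)

/-- ball finset -/
def ballF (d : ℕ) (t : ℝ) : Finset (Fin d → ℤ) :=
  @Finset.filter _ (fun k => znorm k ≤ t) (Classical.decPred _) (box d ⌊t⌋)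

lemma mem_ballF {t : ℝ} {k : Fin d → ℤ} : k ∈ ballF d t ↔ znorm k ≤ t := by
  classical
  rw [ballF, Finset.mem_filter]
  constructor
  · exact fun h => h.2
  · intro h
    refine ⟨mem_box.2 fun i => ?_, h⟩
    have := (abs_coord_le_znorm k i).trans h
    rw [← Int.cast_abs] at this
    exact Int.le_floor.2 this


attribute [local instance] Classical.propDecidable

/-- Counting solutions of a linear congruence in an interval. -/
lemma ap_count {K Q b a : ℤ} (hK : 0 ≤ K) (hQ : 1 ≤ Q) :
    (((Finset.Icc (-K) K).filter (fun x => Q ∣ a + b * x)).card : ℤ) * (Q / (Int.gcd Q b : ℤ)) ≤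
      2 * K + Q / (Int.gcd Q b : ℤ) := by
  set g : ℤ := (Int.gcd Q b : ℤ) with hgdef
  have hg0' : (0:ℕ) < Int.gcd Q b := by
    refine Nat.pos_of_ne_zero fun h => ?_
    exact absurd (Int.gcd_eq_zero_iff.1 h).1 (by omega)
  have hg0 : 0 < g := by rw [hgdef]; exact_mod_cast hg0' 
  have hgQ : g ∣ Q := Int.gcd_dvd_left Q b
  have hgb : g ∣ b := Int.gcd_dvd_right Q b
  set s' : ℤ := Q / g with hs'def
  have hQs' : g * s' = Q := Int.mul_ediv_cancel' hgQ
  have hs'0 : 0 < s' := by nlinarith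
  set X := (Finset.Icc (-K) K).filter (fun x => Q ∣ a + b * x) with hX
  rcases X.eq_empty_or_nonempty with h | h
  · rw [h]; simp; omega
  · set x₀ := X.min' h with hx0def
    have hx₀X : x₀ ∈ X := X.min'_mem h
    have hx₀Icc := (Finset.mem_filter.1 hx₀X).1
    rw [Finset.mem_Icc] at hx₀Icc
    have key : ∀ x ∈ X, s' ∣ x - x₀ := by
      intro x hx
      have h1 : Q ∣ a + b * x := (Finset.mem_filter.1 hx).2
      have h2 : Q ∣ a + b * x₀ := (Finset.mem_filter.1 hx₀X).2
      have h3 : Q ∣ b * (x - x₀) := by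
        have := dvd_sub h1 h2
        have e : a + b * x - (a + b * x₀) = b * (x - x₀) := by ring
        rwa [e] at this
      set b' : ℤ := b / g with hb'def
      have hbb' : g * b' = b := Int.mul_ediv_cancel' hgb
      have h4 : s' ∣ b' * (x - x₀) := by
        rcases h3 with ⟨m, hm⟩
        refine ⟨m, ?_⟩
        have : g * (b' * (x - x₀)) = g * (s' * m) := by
          rw [← mul_assoc, hbb', ← mul_assoc, hQs', ← hm]
        exact mul_left_cancel₀ (ne_of_gt hg0) this
      have hcop : Int.gcd s' b' = 1 := by
        have := Int.gcd_div_gcd_div_gcd (i := Q) (j := b) hg0' 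
        rwa [← hgdef] at this
      exact (Int.isCoprime_iff_gcd_eq_one.mpr hcop).dvd_of_dvd_mul_left h4
    have hinj : ∀ x ∈ X, x = x₀ + s' * ((x - x₀) / s') := by
      intro x hx
      rw [Int.mul_ediv_cancel' (key x hx)]; ring
    have himg : ∀ x ∈ X, (x - x₀) / s' ∈ Finset.Icc (0 : ℤ) (2 * K / s') := by
      intro x hx
      have hxIcc := (Finset.mem_filter.1 hx).1
      rw [Finset.mem_Icc] at hxIcc
      have hge : x₀ ≤ x := X.min'_le x hx
      rw [Finset.mem_Icc]
      constructor
      · exact Int.ediv_nonneg (by omega) (le_of_lt hs'0)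
      · rw [Int.le_ediv_iff_mul_le hs'0, Int.ediv_mul_cancel (key x hx)]
        omega
    have hcard : X.card ≤ (Finset.Icc (0 : ℤ) (2 * K / s')).card := by
      refine Finset.card_le_card_of_injOn (fun x => (x - x₀) / s') himg ?_
      intro x hx y hy hxy
      have hx' := Finset.mem_coe.1 hx
      have hy' := Finset.mem_coe.1 hy
      rw [hinj x hx', hinj y hy']
      exact congrArg (fun t => x₀ + s' * t) hxy
    have hIcc : ((Finset.Icc (0 : ℤ) (2 * K / s')).card : ℤ) = 2 * K / s' + 1 := by
      rw [Int.card_Icc]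
      have : (0:ℤ) ≤ 2 * K / s' := Int.ediv_nonneg (by omega) (le_of_lt hs'0)
      omega
    have h5 : (X.card : ℤ) ≤ 2 * K / s' + 1 := by
      have := hcard
      have h6 : (X.card : ℤ) ≤ ((Finset.Icc (0 : ℤ) (2 * K / s')).card : ℤ) := by exact_mod_cast this
      omega
    have h7 : (2 * K / s') * s' ≤ 2 * K := Int.ediv_mul_le _ (ne_of_gt hs'0)
    calc (X.card : ℤ) * s' ≤ (2 * K / s' + 1) * s' := by
          apply mul_le_mul_of_nonneg_right h5 (le_of_lt hs'0)
      _ = (2 * K / s') * s' + s' := by ring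
      _ ≤ 2 * K + s' := by omega

/-- box supported on a subset of coordinates -/
def boxS (s : Finset (Fin d)) (K : ℤ) : Finset (Fin d → ℤ) :=
  Fintype.piFinset fun i => if i ∈ s then Finset.Icc (-K) K else {0}

lemma sum_mul_update_zero (q k : Fin d → ℤ) (i : Fin d) :
    ∑ u, q u * (Function.update k i 0) u = (∑ u, q u * k u) - q i * k i := by
  have h1 := Finset.sum_erase_add Finset.univ (fun u => q u * (Function.update k i 0) u)
    (Finset.mem_univ i)
  have h2 := Finset.sum_erase_add Finset.univ (fun u => q u * k u) (Finset.mem_univ i)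
  have h3 : ∑ u ∈ Finset.univ.erase i, q u * (Function.update k i 0) u
      = ∑ u ∈ Finset.univ.erase i, q u * k u := by
    refine Finset.sum_congr rfl fun u hu => ?_
    rw [Function.update_of_ne (Finset.ne_of_mem_erase hu)]
  rw [Function.update_self, mul_zero, h3] at h1
  linarith [h1, h2]
  
lemma countA (K : ℤ) (hK : 0 ≤ K) (q : Fin d → ℤ) (s : Finset (Fin d)) :
    ∀ Q : ℤ, 1 ≤ Q → Q ≤ 2 * K + 1 → gcd Q (s.gcd q) = 1 → ∀ c : ℤ,
    Q * (((boxS s K).filter (fun k => Q ∣ (∑ u, q u * k u) - c)).card : ℤ)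
      ≤ (2 * (2 * K + 1)) ^ s.card := by
  induction s using Finset.induction_on with
  | empty =>
      intro Q hQ1 hQK hgcd c
      have hQe : Q = 1 := by
        rw [Finset.gcd_empty, gcd_zero_right, Int.normalize_of_nonneg (by omega)] at hgcd
        exact hgcd
      have hbox : ((boxS (∅ : Finset (Fin d)) K)).card = 1 := by
        rw [boxS, Fintype.card_piFinset]
        simp
      have hc : (((boxS (∅ : Finset (Fin d)) K).filter
          (fun k => Q ∣ (∑ u, q u * k u) - c)).card : ℤ) ≤ 1 := by
        have := le_trans (Finset.card_filter_le (boxS (∅ : Finset (Fin d)) K)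
          (fun k => Q ∣ (∑ u, q u * k u) - c)) (le_of_eq hbox)
        exact_mod_cast this
      rw [Finset.card_empty, pow_zero]
      rw [hQe] at hc ⊢
      rw [one_mul]
      exact hc
  | @insert i s₀ hi ih =>
      intro Q hQ1 hQK hgcd c
      have hg0' : (0:ℕ) < Int.gcd Q (q i) := by
        refine Nat.pos_of_ne_zero fun h => ?_
        exact absurd (Int.gcd_eq_zero_iff.1 h).1 (by omega)
      set g : ℤ := (Int.gcd Q (q i) : ℤ) with hgdef
      have hgg : g = gcd Q (q i) := Int.coe_gcd _ _
      have hg0 : 0 < g := by rw [hgdef]; exact_mod_cast hg0'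
      have hgQ : g ∣ Q := Int.gcd_dvd_left Q (q i)
      have hgqi : g ∣ q i := Int.gcd_dvd_right Q (q i)
      set s' : ℤ := Q / g with hs'def
      have hQs' : g * s' = Q := Int.mul_ediv_cancel' hgQ
      have hs'0 : 0 < s' := by nlinarith
      have hs'K : s' ≤ 2 * K + 1 :=
        le_trans (Int.le_of_dvd (by omega) ⟨g, by rw [← hQs']; ring⟩) hQK
      have hgK : g ≤ 2 * K + 1 := le_trans (Int.le_of_dvd (by omega) hgQ) hQK
      have hgcd₀ : gcd g (s₀.gcd q) = 1 := by
        rw [Finset.gcd_insert, ← gcd_assoc, ← hgg] at hgcd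
        exact hgcd
      set S := (boxS (insert i s₀) K).filter (fun k => Q ∣ (∑ u, q u * k u) - c) with hS
      set S₀ := (boxS s₀ K).filter (fun k => g ∣ (∑ u, q u * k u) - c) with hS₀
      have hmap : ∀ k ∈ S, Function.update k i 0 ∈ S₀ := by
        intro k hk
        rw [hS, Finset.mem_filter] at hk
        obtain ⟨hkbox, hkdvd⟩ := hk
        rw [hS₀, Finset.mem_filter]
        constructor
        · rw [boxS, Fintype.mem_piFinset]
          intro u
          by_cases hu : u = i
          · subst hu
            simp [hi, Function.update_self]
          · rw [Function.update_of_ne hu]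
            rw [boxS, Fintype.mem_piFinset] at hkbox
            have := hkbox u
            by_cases hu2 : u ∈ s₀
            · simpa [hu2, Finset.mem_insert, hu] using this
            · simpa [hu2, Finset.mem_insert, hu] using this
        · rw [sum_mul_update_zero]
          have h1 : g ∣ (∑ u, q u * k u) - c := dvd_trans hgQ hkdvd
          have h2 : g ∣ q i * k i := Dvd.dvd.mul_right hgqi _
          have e : (∑ u, q u * k u) - q i * k i - c = ((∑ u, q u * k u) - c) - q i * k i := by
            ring
          rw [e]
          exact dvd_sub h1 h2
      have hfib : ∀ k₀ ∈ S₀, ((S.filter (fun k => Function.update k i 0 = k₀)).card : ℤ) * s'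
          ≤ 2 * K + s' := by
        intro k₀ _
        set A : ℤ := (∑ u, q u * k₀ u) - c with hA
        set X := (Finset.Icc (-K) K).filter (fun x => Q ∣ A + q i * x) with hX
        have hcard : (S.filter (fun k => Function.update k i 0 = k₀)).card ≤ X.card := by
          refine Finset.card_le_card_of_injOn (fun k => k i) ?_ ?_
          · intro k hk
            rw [Finset.mem_coe, Finset.mem_filter] at hk
            obtain ⟨hkS, hkupd⟩ := hk
            rw [hS, Finset.mem_filter] at hkS
            obtain ⟨hkbox, hkdvd⟩ := hkS
            rw [Finset.mem_coe, hX, Finset.mem_filter]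
            constructor
            · rw [boxS, Fintype.mem_piFinset] at hkbox
              have := hkbox i
              simpa [Finset.mem_insert_self] using this
            · have hsum : ∑ u, q u * k₀ u = (∑ u, q u * k u) - q i * k i := by
                rw [← hkupd, sum_mul_update_zero]
              have e : A + q i * k i = (∑ u, q u * k u) - c := by
                rw [hA, hsum]; ring
              rw [e]
              exact hkdvd
          · intro k hk k' hk' hkk'
            have hk1 := Finset.mem_coe.1 hk
            have hk'1 := Finset.mem_coe.1 hk'
            rw [Finset.mem_filter] at hk1 hk'1
            funext u
            by_cases hu : u = i
            · subst hu; exact hkk'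
            · have e1 : k u = Function.update k i 0 u := (Function.update_of_ne hu 0 k).symm
              have e2 : k' u = Function.update k' i 0 u := (Function.update_of_ne hu 0 k').symm
              rw [e1, e2, hk1.2, hk'1.2]
        have hap := ap_count (K := K) (Q := Q) (b := q i) (a := A) hK hQ1
        have : (X.card : ℤ) * s' ≤ 2 * K + s' := by
          rw [hs'def, hgdef]
          exact hap
        calc ((S.filter (fun k => Function.update k i 0 = k₀)).card : ℤ) * s'
            ≤ (X.card : ℤ) * s' := by
              apply mul_le_mul_of_nonneg_right _ (le_of_lt hs'0)
              exact_mod_cast hcard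
          _ ≤ 2 * K + s' := this
      have hcards : S.card = ∑ k₀ ∈ S₀, (S.filter (fun k => Function.update k i 0 = k₀)).card :=
        Finset.card_eq_sum_card_fiberwise hmap
      have hstep : (S.card : ℤ) * s' ≤ (S₀.card : ℤ) * (2 * K + s') := by
        rw [hcards]
        push_cast
        rw [Finset.sum_mul]
        calc (∑ k₀ ∈ S₀, ((S.filter (fun k => Function.update k i 0 = k₀)).card : ℤ) * s')
            ≤ ∑ k₀ ∈ S₀, (2 * K + s') := Finset.sum_le_sum hfib
          _ = (S₀.card : ℤ) * (2 * K + s') := by rw [Finset.sum_const, nsmul_eq_mul]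
      have ihx := ih g (by omega) hgK hgcd₀ c
      rw [← hS₀] at ihx
      have hfinal : Q * (S.card : ℤ) ≤ (2 * (2 * K + 1)) ^ s₀.card * (2 * (2 * K + 1)) := by
        have e : Q * (S.card : ℤ) = g * ((S.card : ℤ) * s') := by rw [← hQs']; ring
        rw [e]
        calc g * ((S.card : ℤ) * s') ≤ g * ((S₀.card : ℤ) * (2 * K + s')) := by
              apply mul_le_mul_of_nonneg_left hstep (le_of_lt hg0)
          _ = (g * (S₀.card : ℤ)) * (2 * K + s') := by ring
          _ ≤ (2 * (2 * K + 1)) ^ s₀.card * (2 * (2 * K + 1)) := by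
              apply mul_le_mul ihx (by omega) (by positivity) (by positivity)
      rw [Finset.card_insert_of_notMem hi, pow_succ]
      exact hfinal

lemma gcd_abs_left_int (a b : ℤ) : gcd |a| b = gcd a b := by
  refine Associated.gcd_eq_left ?_ b
  rw [Int.abs_eq_natAbs]
  exact (Int.associated_natAbs a).symm

section primPart
variable {n : Fin d → ℤ}

lemma gcd_pos (hn : n ≠ 0) : 0 < Finset.univ.gcd n := by
  have hne : Finset.univ.gcd n ≠ 0 := by
    intro h
    apply hn
    funext i
    exact Finset.gcd_eq_zero_iff.1 h i (Finset.mem_univ i)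
  have hnn : 0 ≤ Finset.univ.gcd n := by
    have h := Finset.normalize_gcd (s := (Finset.univ : Finset (Fin d))) (f := n)
    rw [← Int.abs_eq_normalize] at h
    rw [← h]
    exact abs_nonneg _
  omega

lemma primPart_spec (hn : n ≠ 0) (i : Fin d) :
    n i = Finset.univ.gcd n * primPart n i :=
  (Int.mul_ediv_cancel' (Finset.gcd_dvd (Finset.mem_univ i))).symm

lemma primPart_gcd (hn : n ≠ 0) : Finset.univ.gcd (primPart n) = 1 := by
  obtain ⟨i, hi⟩ : ∃ i, n i ≠ 0 := by
    by_contra hc; push_neg at hc; exact hn (funext hc)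
  exact Finset.gcd_div_eq_one (Finset.mem_univ i) hi

lemma primPart_ne_zero (hn : n ≠ 0) : primPart n ≠ 0 := by
  intro h
  apply hn
  funext i
  rw [primPart_spec hn i, show primPart n i = 0 from congrFun h i, mul_zero]
  rfl

end primPart

lemma Mcount (K : ℤ) (hK : 0 ≤ K) (n : Fin d → ℤ) (hn : n ≠ 0)
    (i₀ : Fin d) (hmax : ∀ i, |primPart n i| ≤ |primPart n i₀|)
    (hQK : |primPart n i₀| ≤ 2 * K + 1) :
    |primPart n i₀| * (((box d K).filter (fun k => znorm (k + n) = znorm k)).card : ℤ)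
      ≤ (2 * (2 * K + 1)) ^ (d - 1) := by
  set g := Finset.univ.gcd n with hgdef
  set q := primPart n with hqdef
  have hg0 : 0 < g := gcd_pos hn
  have hspec : ∀ i, n i = g * q i := primPart_spec hn
  have hq0 : q ≠ 0 := primPart_ne_zero hn
  have hqi₀ : q i₀ ≠ 0 := by
    obtain ⟨i, hi⟩ : ∃ i, q i ≠ 0 := by
      by_contra hc; push_neg at hc; exact hq0 (funext hc)
    intro h
    have h1 := Int.one_le_abs hi
    have h2 := hmax i
    rw [h] at h2
    simp at h2
    omega
  have hQ1 : 1 ≤ |q i₀| := Int.one_le_abs hqi₀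
  set SM := (box d K).filter (fun k => znorm (k + n) = znorm k) with hSM
  have hconstr : ∀ k ∈ SM, 2 * ∑ u, q u * k u + g * ∑ u, q u ^ 2 = 0 := by
    intro k hk
    rw [hSM, Finset.mem_filter] at hk
    have h1 : (∑ u, ((k + n) u) ^ 2 : ℤ) = ∑ u, (k u) ^ 2 := znorm_eq_iff.1 hk.2
    have h2 : (∑ u, ((k + n) u) ^ 2 : ℤ)
        = ∑ u, ((k u) ^ 2 + ((g * 2) * (q u * k u) + g ^ 2 * (q u) ^ 2)) := by
      refine Finset.sum_congr rfl fun u _ => ?_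
      rw [Pi.add_apply, hspec u]
      ring
    rw [h2, Finset.sum_add_distrib, Finset.sum_add_distrib, ← Finset.mul_sum,
      ← Finset.mul_sum] at h1
    have h3 : g * (2 * ∑ u, q u * k u + g * ∑ u, q u ^ 2) = 0 := by linarith
    rcases mul_eq_zero.1 h3 with h4 | h4
    · omega
    · exact h4
  by_cases hpar : ∃ c : ℤ, g * ∑ u, q u ^ 2 = 2 * c
  · obtain ⟨c, hc⟩ := hpar
    have hsum : ∀ k ∈ SM, ∑ u, q u * k u = -c := by
      intro k hk
      have := hconstr k hk
      omega
    set CG := (boxS (Finset.univ.erase i₀) K).filter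
      (fun k => |q i₀| ∣ (∑ u, q u * k u) - (-c)) with hCG
    have hinj : (SM.card : ℤ) ≤ (CG.card : ℤ) := by
      have : SM.card ≤ CG.card := by
        refine Finset.card_le_card_of_injOn (fun k => Function.update k i₀ 0) ?_ ?_
        · intro k hk
          have hkSM := hk
          dsimp only
          rw [hSM, Finset.mem_coe, Finset.mem_filter] at hk
          rw [Finset.mem_coe, hCG, Finset.mem_filter]
          constructor
          · rw [boxS, Fintype.mem_piFinset]
            intro u
            by_cases hu : u = i₀
            · subst hu
              simp [Function.update_self]
            · rw [Function.update_of_ne hu]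
              have humem : u ∈ Finset.univ.erase i₀ := Finset.mem_erase.2 ⟨hu, Finset.mem_univ u⟩
              rw [if_pos humem]
              have := mem_box.1 hk.1 u
              rw [Finset.mem_Icc]
              exact abs_le.1 this
          · rw [sum_mul_update_zero, hsum k hkSM]
            have e : -c - q i₀ * k i₀ - (-c) = -(q i₀ * k i₀) := by ring
            rw [e]
            exact dvd_neg.2 ((abs_dvd (q i₀) (q i₀ * k i₀)).2 (Dvd.dvd.mul_right dvd_rfl _))
        · intro k hk k' hk' hkk'
          have hk1 := Finset.mem_coe.1 hk
          have hk'1 := Finset.mem_coe.1 hk'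
          dsimp only at hkk'
          have hs1 := hsum k hk1
          have hs2 := hsum k' hk'1
          have e1 : ∑ u, q u * (Function.update k i₀ 0) u = -c - q i₀ * k i₀ := by
            rw [sum_mul_update_zero, hs1]
          have e2 : ∑ u, q u * (Function.update k' i₀ 0) u = -c - q i₀ * k' i₀ := by
            rw [sum_mul_update_zero, hs2]
          have e3 : q i₀ * k i₀ = q i₀ * k' i₀ := by
            rw [hkk'] at e1
            rw [e1] at e2
            omega
          have e4 : k i₀ = k' i₀ := mul_left_cancel₀ hqi₀ e3
          funext u
          by_cases hu : u = i₀
          · subst hu; exact e4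
          · have h5 : Function.update k i₀ 0 u = Function.update k' i₀ 0 u := congrFun hkk' u
            rwa [Function.update_of_ne hu, Function.update_of_ne hu] at h5
      exact_mod_cast this
    have hgcdcond : gcd |q i₀| ((Finset.univ.erase i₀).gcd q) = 1 := by
      rw [gcd_abs_left_int]
      have h1 : Finset.univ.gcd q = 1 := primPart_gcd hn
      rw [← Finset.insert_erase (Finset.mem_univ i₀), Finset.gcd_insert] at h1
      exact h1
    have hcA := countA K hK q (Finset.univ.erase i₀) |q i₀| hQ1 hQK hgcdcond (-c)
    rw [← hCG] at hcA
    have hcardera : (Finset.univ.erase i₀).card = d - 1 := by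
      rw [Finset.card_erase_of_mem (Finset.mem_univ i₀), Finset.card_univ, Fintype.card_fin]
    rw [hcardera] at hcA
    calc |q i₀| * (SM.card : ℤ) ≤ |q i₀| * (CG.card : ℤ) := by
          apply mul_le_mul_of_nonneg_left hinj (abs_nonneg _)
      _ ≤ (2 * (2 * K + 1)) ^ (d - 1) := hcA
  · have hempty : SM = ∅ := by
      rw [Finset.eq_empty_iff_forall_notMem]
      intro k hk
      exact hpar ⟨-(∑ u, q u * k u), by have := hconstr k hk; omega⟩
    rw [hempty]
    simp only [Finset.card_empty, Nat.cast_zero, mul_zero]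
    positivity

section eig
variable (B : Eigenbasis d)

lemma c_supp_ball {j : ℕ} {t : ℝ} (hj : B.Λ j ≤ t) {k : Fin d → ℤ} (hk : B.c j k ≠ 0) :
    k ∈ ballF d t :=
  mem_ballF.2 (by rw [B.supp j k hk]; exact hj)

lemma ortho_sum {t : ℝ} {i j : ℕ} (hi : B.Λ i ≤ t) :
    ∑ k ∈ ballF d t, B.c i k * conj (B.c j k) = if i = j then 1 else 0 := by
  refine Eq.trans (tsum_eq_sum fun k hk => ?_).symm (B.ortho i j)
  by_cases h : B.c i k = 0
  · rw [h, zero_mul]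
  · exact absurd (c_supp_ball B hi h) hk

lemma psi_sum {j : ℕ} {t : ℝ} (hj : B.Λ j ≤ t) (x : Td d) :
    B.ψ j x = ∑ k ∈ ballF d t, B.c j k * eChar k x := by
  rw [B.repr j x]
  refine tsum_eq_sum fun k hk => ?_
  by_cases h : B.c j k = 0
  · rw [h, zero_mul]
  · exact absurd (c_supp_ball B hj h) hk

lemma Dj_eq (μ : Measure (Td d)) [IsProbabilityMeasure μ] (a : Td d → ℂ) (ha : Continuous a)
    {lam : ℝ} {j : ℕ} (hj : B.Λ j ≤ lam) :
    (∫ x, a x * ((‖B.ψ j x‖ ^ 2 : ℝ) : ℂ) ∂μ) - ∫ x, a x ∂μ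
      = ∑ l ∈ ballF d lam, conj (B.c j l) *
          (∑ k ∈ ballF d lam, (if znorm l = znorm k ∧ k ≠ l then
             (∫ x, a x * conj (eChar (l - k) x) ∂μ) else 0) * B.c j k) := by
  set BF := ballF d lam with hBF
  set c := B.c j with hc
  set I : (Fin d → ℤ) → ℂ := fun m => ∫ x, a x * eChar m x ∂μ with hI
  have hFI : ∀ l k : Fin d → ℤ, (∫ x, a x * conj (eChar (l - k) x) ∂μ) = I (k - l) := by
    intro l k
    rw [hI]
    refine integral_congr_ae (Filter.Eventually.of_forall fun x => ?_)
    dsimp only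
    rw [eChar_conj, neg_sub]
  have step1 : ∀ x, a x * ((‖B.ψ j x‖ ^ 2 : ℝ) : ℂ)
      = ∑ k ∈ BF, ∑ l ∈ BF, (c k * conj (c l)) * (a x * eChar (k - l) x) := by
    intro x
    have hz : ∀ z : ℂ, ((‖z‖ ^ 2 : ℝ) : ℂ) = z * conj z := fun z => by
      rw [Complex.mul_conj, Complex.normSq_eq_norm_sq]
    rw [hz, psi_sum B hj x, ← hBF, ← hc]
    rw [map_sum (starRingEnd ℂ) _ BF, Finset.sum_mul_sum]
    rw [Finset.mul_sum]
    refine Finset.sum_congr rfl fun k _ => ?_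
    rw [Finset.mul_sum]
    refine Finset.sum_congr rfl fun l _ => ?_
    rw [map_mul, ← eChar_mul_conj]
    ring
  have hint : ∀ m : Fin d → ℤ, Integrable (fun x => a x * eChar m x) μ :=
    fun m => integrable_cont (ha.mul (eChar_continuous m)) μ
  have step2 : (∫ x, a x * ((‖B.ψ j x‖ ^ 2 : ℝ) : ℂ) ∂μ)
      = ∑ k ∈ BF, ∑ l ∈ BF, (c k * conj (c l)) * I (k - l) := by
    rw [integral_congr_ae (Filter.Eventually.of_forall step1)]
    rw [integral_finset_sum _ fun k _ => integrable_finset_sum _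
      fun l _ => (hint (k - l)).const_mul _]
    refine Finset.sum_congr rfl fun k _ => ?_
    rw [integral_finset_sum _ fun l _ => (hint (k - l)).const_mul _]
    refine Finset.sum_congr rfl fun l _ => ?_
    exact integral_const_mul _ _
  have hI0 : I 0 = ∫ x, a x ∂μ := by
    rw [hI]
    refine integral_congr_ae (Filter.Eventually.of_forall fun x => ?_)
    dsimp only
    rw [eChar_zero, mul_one]
  have key : ∀ k ∈ BF, ∀ l ∈ BF,
      (c k * conj (c l)) * I (k - l)
        = (if k = l then c k * conj (c l) * I 0 else 0)
          + conj (c l) * ((if znorm l = znorm k ∧ k ≠ l then I (k - l) else 0) * c k) := by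
    intro k _ l _
    by_cases hkl : k = l
    · subst hkl
      rw [if_pos rfl, if_neg (by simp), sub_self]
      ring
    · rw [if_neg hkl]
      by_cases hzn : znorm l = znorm k
      · rw [if_pos ⟨hzn, hkl⟩]
        ring
      · rw [if_neg (by tauto)]
        have hzero : c k * conj (c l) = 0 := by
          by_cases h1 : c k = 0
          · rw [h1, zero_mul]
          · have h2 : c l = 0 := by
              by_contra h2
              exact hzn ((B.supp j l h2).trans (B.supp j k h1).symm)
            rw [h2, map_zero, mul_zero]
        rw [hzero]
        ring
  have step3 : ∑ k ∈ BF, ∑ l ∈ BF, (c k * conj (c l)) * I (k - l)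
      = (∫ x, a x ∂μ) + ∑ l ∈ BF, conj (c l) *
          (∑ k ∈ BF, (if znorm l = znorm k ∧ k ≠ l then I (k - l) else 0) * c k) := by
    rw [Finset.sum_congr rfl fun k hk => Finset.sum_congr rfl fun l hl => key k hk l hl]
    rw [Finset.sum_congr rfl fun k (_ : k ∈ BF) => Finset.sum_add_distrib,
      Finset.sum_add_distrib]
    congr 1
    · have hdiag : ∀ k ∈ BF, (∑ l ∈ BF, if k = l then c k * conj (c l) * I 0 else 0)
          = (c k * conj (c k)) * I 0 := by
        intro k hk
        rw [Finset.sum_ite_eq BF k (fun l => c k * conj (c l) * I 0), if_pos hk]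
      rw [Finset.sum_congr rfl hdiag, ← Finset.sum_mul]
      rw [hc, ortho_sum B hj, if_pos rfl, one_mul, hI0]
    · rw [Finset.sum_comm]
      exact Finset.sum_congr rfl fun l _ => (Finset.mul_sum _ _ _).symm
  rw [step2, step3]
  have hrw : ∀ l ∈ BF, conj (c l) * (∑ k ∈ BF, (if znorm l = znorm k ∧ k ≠ l then
        (∫ x, a x * conj (eChar (l - k) x) ∂μ) else 0) * c k)
      = conj (c l) * (∑ k ∈ BF, (if znorm l = znorm k ∧ k ≠ l then I (k - l) else 0) * c k) := by
    intro l _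
    congr 1
    exact Finset.sum_congr rfl fun k _ => by rw [hFI l k]
  rw [Finset.sum_congr rfl hrw]
  ring

lemma sumJ_le (μ : Measure (Td d)) [IsProbabilityMeasure μ] (a : Td d → ℂ) (ha : Continuous a)
    {lam : ℝ} (J : Finset ℕ) (hJ : ∀ j ∈ J, B.Λ j ≤ lam) :
    ∑ j ∈ J, ‖(∫ x, a x * ((‖B.ψ j x‖ ^ 2 : ℝ) : ℂ) ∂μ) - ∫ x, a x ∂μ‖ ^ 2
      ≤ ∑ l ∈ ballF d lam, ∑ k ∈ ballF d lam,
          ‖(if znorm l = znorm k ∧ k ≠ l then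
              (∫ x, a x * conj (eChar (l - k) x) ∂μ) else 0)‖ ^ 2 := by
  classical
  set BF := ballF d lam with hBF
  set T : (Fin d → ℤ) → (Fin d → ℤ) → ℂ := fun l k => if znorm l = znorm k ∧ k ≠ l then
      (∫ x, a x * conj (eChar (l - k) x) ∂μ) else 0 with hT
  set H := EuclideanSpace ℂ {k // k ∈ BF} with hH
  set u : ℕ → H := fun j => WithLp.toLp 2 (fun k : {k // k ∈ BF} => B.c j k.1) with hu
  set w : ℕ → H := fun j => WithLp.toLp 2 (fun l : {k // k ∈ BF} => ∑ k ∈ BF, T l.1 k * B.c j k) with hw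
  set v : {k // k ∈ BF} → H := fun l => WithLp.toLp 2 (fun k : {k // k ∈ BF} => conj (T l.1 k.1)) with hv
  have hinner : ∀ i j : ℕ, i ∈ J → j ∈ J → (inner ℂ (u i) (u j) : ℂ) = if i = j then 1 else 0 := by
    intro i j hi hj
    rw [PiLp.inner_apply]
    have e1 : ∀ k : {k // k ∈ BF}, (inner ℂ (u i k) (u j k) : ℂ)
        = conj (B.c i k.1) * B.c j k.1 := fun k => RCLike.inner_apply' _ _
    rw [Finset.sum_congr rfl fun k _ => e1 k]
    have e2 : ∑ k : {k // k ∈ BF}, conj (B.c i k.1) * B.c j k.1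
        = ∑ k ∈ BF, conj (B.c i k) * B.c j k :=
      Finset.sum_coe_sort BF (fun k => conj (B.c i k) * B.c j k)
    rw [e2]
    have e3 : ∑ k ∈ BF, conj (B.c i k) * B.c j k
        = conj (∑ k ∈ BF, B.c i k * conj (B.c j k)) := by
      rw [map_sum (starRingEnd ℂ)]
      exact Finset.sum_congr rfl fun k _ => by rw [map_mul, Complex.conj_conj, mul_comm]
    rw [e3, ortho_sum B (hJ i hi)]
    by_cases h : i = j
    · subst h; simp
    · rw [if_neg h, map_zero]
  have hDw : ∀ j ∈ J, (∫ x, a x * ((‖B.ψ j x‖ ^ 2 : ℝ) : ℂ) ∂μ) - ∫ x, a x ∂μ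
      = (inner ℂ (u j) (w j) : ℂ) := by
    intro j hj
    rw [Dj_eq B μ a ha (hJ j hj), PiLp.inner_apply]
    have e1 : ∀ l : {k // k ∈ BF}, (inner ℂ (u j l) (w j l) : ℂ)
        = conj (B.c j l.1) * (∑ k ∈ BF, T l.1 k * B.c j k) := fun l => RCLike.inner_apply' _ _
    rw [Finset.sum_congr rfl fun l _ => e1 l]
    exact (Finset.sum_coe_sort BF (fun l => conj (B.c j l) * (∑ k ∈ BF, T l k * B.c j k))).symm
  have hnormu : ∀ j ∈ J, ‖u j‖ = 1 := by
    intro j hj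
    have h1 : (inner ℂ (u j) (u j) : ℂ) = 1 := by rw [hinner j j hj hj, if_pos rfl]
    have h2 : ‖u j‖ ^ 2 = 1 := by
      rw [← inner_self_eq_norm_sq (𝕜 := ℂ) (u j), h1]
      simp
    have h3 := congrArg Real.sqrt h2
    rwa [Real.sqrt_sq (norm_nonneg _), Real.sqrt_one] at h3
  have hCS : ∀ j ∈ J, ‖(∫ x, a x * ((‖B.ψ j x‖ ^ 2 : ℝ) : ℂ) ∂μ) - ∫ x, a x ∂μ‖ ^ 2
      ≤ ‖w j‖ ^ 2 := by
    intro j hj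
    rw [hDw j hj]
    have h1 : ‖(inner ℂ (u j) (w j) : ℂ)‖ ≤ ‖u j‖ * ‖w j‖ := norm_inner_le_norm _ _
    rw [hnormu j hj, one_mul] at h1
    exact pow_le_pow_left₀ (norm_nonneg _) h1 2
  have hw2 : ∀ j : ℕ, ‖w j‖ ^ 2 = ∑ l : {k // k ∈ BF}, ‖w j l‖ ^ 2 := by
    intro j
    rw [EuclideanSpace.norm_eq, Real.sq_sqrt (by positivity)]
  have hwv : ∀ (j : ℕ) (l : {k // k ∈ BF}), w j l = (inner ℂ (v l) (u j) : ℂ) := by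
    intro j l
    rw [PiLp.inner_apply]
    have e1 : ∀ k : {k // k ∈ BF}, (inner ℂ (v l k) (u j k) : ℂ)
        = T l.1 k.1 * B.c j k.1 := fun k => by
      rw [RCLike.inner_apply', hv]
      dsimp only
      rw [Complex.conj_conj]
    rw [Finset.sum_congr rfl fun k _ => e1 k]
    exact (Finset.sum_coe_sort BF (fun k => T l.1 k * B.c j k)).symm
  have horth : Orthonormal ℂ (fun j : {j // j ∈ J} => u j.1) := by
    rw [orthonormal_iff_ite]
    intro i j
    rw [hinner i.1 j.1 i.2 j.2]
    by_cases h : i = j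
    · subst h; rw [if_pos rfl, if_pos rfl]
    · rw [if_neg (fun hh => h (Subtype.ext hh)), if_neg h]
  have hBessel : ∀ l : {k // k ∈ BF}, ∑ j ∈ J, ‖w j l‖ ^ 2 ≤ ‖v l‖ ^ 2 := by
    intro l
    have h1 : ∑ j ∈ J, ‖w j l‖ ^ 2
        = ∑ j : {j // j ∈ J}, ‖(inner ℂ (u j.1) (v l) : ℂ)‖ ^ 2 := by
      rw [← Finset.sum_coe_sort J (fun j => ‖w j l‖ ^ 2)]
      refine Finset.sum_congr rfl fun j _ => ?_
      rw [hwv j.1 l, norm_inner_symm]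
    rw [h1]
    exact horth.sum_inner_products_le (v l)
  have hv2 : ∀ l : {k // k ∈ BF}, ‖v l‖ ^ 2 = ∑ k ∈ BF, ‖T l.1 k‖ ^ 2 := by
    intro l
    rw [EuclideanSpace.norm_eq, Real.sq_sqrt (by positivity)]
    rw [← Finset.sum_coe_sort BF (fun k => ‖T l.1 k‖ ^ 2)]
    refine Finset.sum_congr rfl fun k _ => ?_
    rw [hv]
    dsimp only
    rw [RCLike.norm_conj]
  calc ∑ j ∈ J, ‖(∫ x, a x * ((‖B.ψ j x‖ ^ 2 : ℝ) : ℂ) ∂μ) - ∫ x, a x ∂μ‖ ^ 2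
      ≤ ∑ j ∈ J, ‖w j‖ ^ 2 := Finset.sum_le_sum hCS
    _ = ∑ j ∈ J, ∑ l : {k // k ∈ BF}, ‖w j l‖ ^ 2 := Finset.sum_congr rfl fun j _ => hw2 j
    _ = ∑ l : {k // k ∈ BF}, ∑ j ∈ J, ‖w j l‖ ^ 2 := Finset.sum_comm
    _ ≤ ∑ l : {k // k ∈ BF}, ‖v l‖ ^ 2 := Finset.sum_le_sum fun l _ => hBessel l
    _ = ∑ l : {k // k ∈ BF}, ∑ k ∈ BF, ‖T l.1 k‖ ^ 2 :=
        Finset.sum_congr rfl fun l _ => hv2 l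
    _ = ∑ l ∈ BF, ∑ k ∈ BF, ‖T l k‖ ^ 2 :=
        Finset.sum_coe_sort BF (fun l => ∑ k ∈ BF, ‖T l k‖ ^ 2)

end eig

lemma ballF_subset_box {lam : ℝ} : ballF d lam ⊆ box d ⌊lam⌋ := Finset.filter_subset _ _

def Ann (d : ℕ) (lam : ℝ) : Finset (Fin d → ℤ) :=
  (box d ⌊2 * lam⌋).filter (fun n => 1 ≤ znorm n ∧ znorm n ≤ 2 * lam)

lemma mem_Ann {lam : ℝ} {n : Fin d → ℤ} :
    n ∈ Ann d lam ↔ 1 ≤ znorm n ∧ znorm n ≤ 2 * lam := by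
  rw [Ann, Finset.mem_filter]
  constructor
  · exact fun h => h.2
  · intro h
    refine ⟨mem_box.2 fun i => ?_, h⟩
    have h1 := (abs_coord_le_znorm n i).trans h.2
    rw [← Int.cast_abs] at h1
    exact Int.le_floor.2 h1

lemma Treindex (F : (Fin d → ℤ) → ℂ) (lam : ℝ) :
    ∑ l ∈ ballF d lam, ∑ k ∈ ballF d lam,
        ‖(if znorm l = znorm k ∧ k ≠ l then F (l - k) else 0)‖ ^ 2
      ≤ ∑ n ∈ Ann d lam,
          (((box d ⌊lam⌋).filter (fun k => znorm (k + n) = znorm k)).card : ℝ) * ‖F n‖ ^ 2 := by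
  classical
  set BF := ballF d lam with hBF
  set P := (BF ×ˢ BF).filter (fun p : (Fin d → ℤ) × (Fin d → ℤ) =>
    znorm p.1 = znorm p.2 ∧ p.2 ≠ p.1) with hP
  have e1 : ∑ l ∈ BF, ∑ k ∈ BF, ‖(if znorm l = znorm k ∧ k ≠ l then F (l - k) else 0)‖ ^ 2
      = ∑ p ∈ P, ‖F (p.1 - p.2)‖ ^ 2 := by
    rw [hP, Finset.sum_filter, ← Finset.sum_product']
    refine Finset.sum_congr rfl fun p _ => ?_
    by_cases h : znorm p.1 = znorm p.2 ∧ p.2 ≠ p.1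
    · rw [if_pos h, if_pos h]
    · rw [if_neg h, if_neg h, norm_zero]
      norm_num
  rw [e1]
  have hmaps : ∀ p ∈ P, p.1 - p.2 ∈ Ann d lam := by
    intro p hp
    rw [hP, Finset.mem_filter, Finset.mem_product] at hp
    obtain ⟨⟨h1, h2⟩, h3, h4⟩ := hp
    rw [mem_Ann]
    constructor
    · exact one_le_znorm (sub_ne_zero.2 (fun h => h4 h.symm))
    · calc znorm (p.1 - p.2) ≤ znorm p.1 + znorm p.2 := znorm_sub_le _ _
        _ ≤ lam + lam := add_le_add (mem_ballF.1 h1) (mem_ballF.1 h2)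
        _ = 2 * lam := by ring
  rw [← Finset.sum_fiberwise_of_maps_to hmaps (fun p => ‖F (p.1 - p.2)‖ ^ 2)]
  refine Finset.sum_le_sum fun n hn => ?_
  have e2 : ∑ p ∈ P.filter (fun p => p.1 - p.2 = n), ‖F (p.1 - p.2)‖ ^ 2
      = (P.filter (fun p => p.1 - p.2 = n)).card * ‖F n‖ ^ 2 := by
    rw [Finset.sum_congr rfl (fun p hp => by
      rw [(Finset.mem_filter.1 hp).2] : ∀ p ∈ P.filter (fun p => p.1 - p.2 = n),
        ‖F (p.1 - p.2)‖ ^ 2 = ‖F n‖ ^ 2)]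
    rw [Finset.sum_const, nsmul_eq_mul]
  rw [e2]
  have hcard : (P.filter (fun p => p.1 - p.2 = n)).card
      ≤ ((box d ⌊lam⌋).filter (fun k => znorm (k + n) = znorm k)).card := by
    refine Finset.card_le_card_of_injOn (fun p => p.2) ?_ ?_
    · intro p hp
      rw [Finset.mem_coe, Finset.mem_filter] at hp
      obtain ⟨hp1, hp2⟩ := hp
      rw [hP, Finset.mem_filter, Finset.mem_product] at hp1
      obtain ⟨⟨h1, h2⟩, h3, h4⟩ := hp1
      rw [Finset.mem_coe, Finset.mem_filter]
      refine ⟨ballF_subset_box h2, ?_⟩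
      have e3 : p.2 + n = p.1 := by rw [← hp2]; ring
      rw [e3, h3]
    · intro p hp p' hp' hpp'
      have hp1 := Finset.mem_coe.1 hp
      have hp'1 := Finset.mem_coe.1 hp'
      rw [Finset.mem_filter] at hp1 hp'1
      replace hpp' : p.2 = p'.2 := hpp'
      have h5 : p.1 = p'.1 := by
        have e4 : p.1 = n + p.2 := by rw [← hp1.2]; ring
        have e5 : p'.1 = n + p'.2 := by rw [← hp'1.2]; ring
        rw [e4, e5, hpp']
      exact Prod.ext h5 hpp'
  calc ((P.filter (fun p => p.1 - p.2 = n)).card : ℝ) * ‖F n‖ ^ 2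
      ≤ (((box d ⌊lam⌋).filter (fun k => znorm (k + n) = znorm k)).card : ℝ) * ‖F n‖ ^ 2 := by
        apply mul_le_mul_of_nonneg_right _ (by positivity)
        exact_mod_cast hcard
    _ = _ := rfl

lemma latticeCount_eq (lam : ℝ) : latticeCount d lam = (ballF d lam).card := by
  rw [latticeCount, show {k : Fin d → ℤ | znorm k ≤ lam} = ↑(ballF d lam) from
    Set.ext fun k => by rw [Finset.mem_coe, mem_ballF]; rfl, Set.ncard_coe_finset]

lemma two_floor_succ_ge {t : ℝ} (ht : 0 ≤ t) : t ≤ 2 * (⌊t⌋ : ℝ) + 1 := by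
  have h1 : (⌊t⌋ : ℝ) > t - 1 := Int.sub_one_lt_floor t
  have h2 : (0:ℝ) ≤ ⌊t⌋ := by exact_mod_cast Int.floor_nonneg.2 ht
  by_cases h : t ≤ 1
  · linarith
  · linarith

lemma latticeCount_lower (lam : ℝ) (hlam : 0 < lam) (hd : 0 < d) :
    lam ^ d ≤ Real.sqrt d ^ d * (latticeCount d lam : ℝ) ∧ 1 ≤ latticeCount d lam := by
  have hsd : (0:ℝ) < Real.sqrt d := Real.sqrt_pos.2 (by exact_mod_cast hd)
  set K' := ⌊lam / Real.sqrt d⌋ with hK'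
  have hK'0 : 0 ≤ K' := Int.floor_nonneg.2 (by positivity)
  have hsub : box d K' ⊆ ballF d lam := by
    intro k hk
    rw [mem_ballF]
    have h1 : ∀ i, ((k i : ℝ)) ^ 2 ≤ ((K' : ℝ)) ^ 2 := by
      intro i
      have := mem_box.1 hk i
      have h2 : |(k i : ℝ)| ≤ (K' : ℝ) := by exact_mod_cast this
      nlinarith [abs_nonneg ((k i : ℝ)), sq_abs ((k i : ℝ))]
    have h3 : ∑ i, ((k i : ℝ)) ^ 2 ≤ d * ((K' : ℝ)) ^ 2 := by
      calc ∑ i, ((k i : ℝ)) ^ 2 ≤ ∑ _i : Fin d, ((K' : ℝ)) ^ 2 := Finset.sum_le_sum fun i _ => h1 i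
        _ = d * ((K' : ℝ)) ^ 2 := by rw [Finset.sum_const, Finset.card_univ, Fintype.card_fin,
            nsmul_eq_mul]
    have h4 : (K' : ℝ) ≤ lam / Real.sqrt d := Int.floor_le _
    have h5 : Real.sqrt d * (K' : ℝ) ≤ lam := by
      rw [mul_comm]
      calc (K' : ℝ) * Real.sqrt d ≤ (lam / Real.sqrt d) * Real.sqrt d := by
            apply mul_le_mul_of_nonneg_right h4 (le_of_lt hsd)
        _ = lam := div_mul_cancel₀ _ (ne_of_gt hsd)
    calc znorm k = Real.sqrt (∑ i, ((k i : ℝ)) ^ 2) := rfl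
      _ ≤ Real.sqrt (d * ((K' : ℝ)) ^ 2) := Real.sqrt_le_sqrt h3
      _ = Real.sqrt d * (K' : ℝ) := by
          rw [Real.sqrt_mul (by positivity), Real.sqrt_sq (by exact_mod_cast hK'0)]
      _ ≤ lam := h5
  have hcardbox : (box d K').card = ((2 * K' + 1).toNat) ^ d := by
    rw [box, Fintype.card_piFinset]
    rw [Finset.prod_const, Finset.card_univ, Fintype.card_fin]
    congr 1
    rw [Int.card_Icc]
    congr 1
    ring
  have hcard : ((2 * K' + 1).toNat) ^ d ≤ latticeCount d lam := by
    rw [latticeCount_eq, ← hcardbox]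
    exact Finset.card_le_card hsub
  constructor
  · have h6 : lam / Real.sqrt d ≤ 2 * (K' : ℝ) + 1 := two_floor_succ_ge (by positivity)
    have h7 : lam ≤ Real.sqrt d * (2 * (K' : ℝ) + 1) := by
      rw [div_le_iff₀ hsd] at h6
      linarith [h6]
    have h8 : lam ^ d ≤ (Real.sqrt d * (2 * (K' : ℝ) + 1)) ^ d :=
      pow_le_pow_left₀ (le_of_lt hlam) h7 d
    rw [mul_pow] at h8
    have h9 : ((2 * (K' : ℝ)) + 1) ^ d ≤ (latticeCount d lam : ℝ) := by
      have h10 : ((2 * K' + 1 : ℤ) : ℝ) = 2 * (K' : ℝ) + 1 := by push_cast; ring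
      rw [← h10]
      have h11 : ((2 * K' + 1 : ℤ) : ℝ) = (((2 * K' + 1).toNat : ℕ) : ℝ) := by
        have h12 : ((2 * K' + 1).toNat : ℤ) = 2 * K' + 1 := Int.toNat_of_nonneg (by omega)
        exact_mod_cast h12.symm
      rw [h11]
      have := hcard
      calc (((2 * K' + 1).toNat : ℕ) : ℝ) ^ d = ((((2 * K' + 1).toNat) ^ d : ℕ) : ℝ) := by
            push_cast; ring
        _ ≤ (latticeCount d lam : ℝ) := by exact_mod_cast hcard
    calc lam ^ d ≤ Real.sqrt d ^ d * (2 * (K' : ℝ) + 1) ^ d := h8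
      _ ≤ Real.sqrt d ^ d * (latticeCount d lam : ℝ) := by
          apply mul_le_mul_of_nonneg_left h9 (by positivity)
  · calc 1 = 1 ^ d := (one_pow d).symm
      _ ≤ ((2 * K' + 1).toNat) ^ d := Nat.pow_le_pow_left (by omega) d
      _ ≤ latticeCount d lam := hcard

lemma per_n_bound (lam : ℝ) (hlam : 0 < lam) (hd : 0 < d) {n : Fin d → ℤ}
    (hn1 : 1 ≤ znorm n) (hn2 : znorm n ≤ 2 * lam) :
    (((box d ⌊lam⌋).filter (fun k => znorm (k + n) = znorm k)).card : ℝ) * (lam * znorm (primPart n))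
      ≤ (8 ^ d * Real.sqrt d ^ (d + 1)) * (latticeCount d lam : ℝ) := by
  classical
  haveI : Nonempty (Fin d) := Fin.pos_iff_nonempty.1 hd
  have hsd : (0:ℝ) < Real.sqrt d := Real.sqrt_pos.2 (by exact_mod_cast hd)
  have hn0 : n ≠ 0 := by
    intro h
    rw [h, znorm_zero] at hn1
    linarith
  set q := primPart n with hq
  have hg0 : 0 < Finset.univ.gcd n := gcd_pos hn0
  have hspec : ∀ i, n i = Finset.univ.gcd n * q i := primPart_spec hn0
  obtain ⟨i₀, -, hmax⟩ := Finset.exists_max_image Finset.univ (fun i => |q i|)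
    Finset.univ_nonempty
  have hmax' : ∀ i, |q i| ≤ |q i₀| := fun i => hmax i (Finset.mem_univ i)
  have hlamhalf : (1:ℝ)/2 ≤ lam := by linarith
  set K := ⌊lam⌋ with hK
  have hK0 : 0 ≤ K := Int.floor_nonneg.2 (le_of_lt hlam)
  have hKlam : (K : ℝ) ≤ lam := Int.floor_le lam
  have habs1 : |q i₀| ≤ |n i₀| := by
    rw [hspec i₀, abs_mul, abs_of_pos hg0]
    nlinarith [abs_nonneg (q i₀), hg0]
  have habs2 : ((|q i₀| : ℤ) : ℝ) ≤ 2 * lam := by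
    calc ((|q i₀| : ℤ) : ℝ) ≤ ((|n i₀| : ℤ) : ℝ) := by exact_mod_cast habs1
      _ = |(n i₀ : ℝ)| := by rw [Int.cast_abs]
      _ ≤ znorm n := abs_coord_le_znorm n i₀
      _ ≤ 2 * lam := hn2
  have hQK : |q i₀| ≤ 2 * K + 1 := by
    have h1 : lam < (K : ℝ) + 1 := Int.lt_floor_add_one lam
    have e : ((2 * K + 2 : ℤ) : ℝ) = 2 * (K : ℝ) + 2 := by push_cast; ring
    have h2 : ((|q i₀| : ℤ) : ℝ) < ((2 * K + 2 : ℤ) : ℝ) := by rw [e]; linarith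
    have h3 : |q i₀| < 2 * K + 2 := by exact_mod_cast h2
    omega
  have hMc := Mcount K hK0 n hn0 i₀ hmax' hQK
  rw [← hq] at hMc
  set M := (((box d K).filter (fun k => znorm (k + n) = znorm k)).card : ℝ) with hM
  have hM0 : 0 ≤ M := by positivity
  set Qr := ((|q i₀| : ℤ) : ℝ) with hQr
  have hQr0 : 0 ≤ Qr := by rw [hQr]; exact_mod_cast abs_nonneg (q i₀)
  have hMcR : Qr * M ≤ ((2 * (2 * K + 1) : ℤ) : ℝ) ^ (d - 1) := by
    rw [hQr, hM]
    exact_mod_cast hMc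
  have hZ : znorm q ≤ Real.sqrt d * Qr := by
    have h1 : ∀ i, ((q i : ℝ)) ^ 2 ≤ Qr ^ 2 := by
      intro i
      have h2 : ((|q i| : ℤ) : ℝ) ≤ Qr := by rw [hQr]; exact_mod_cast hmax' i
      rw [Int.cast_abs] at h2
      nlinarith [abs_nonneg ((q i : ℝ)), sq_abs ((q i : ℝ))]
    have h3 : ∑ i, ((q i : ℝ)) ^ 2 ≤ d * Qr ^ 2 := by
      calc ∑ i, ((q i : ℝ)) ^ 2 ≤ ∑ _i : Fin d, Qr ^ 2 := Finset.sum_le_sum fun i _ => h1 i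
        _ = d * Qr ^ 2 := by rw [Finset.sum_const, Finset.card_univ, Fintype.card_fin,
            nsmul_eq_mul]
    calc znorm q = Real.sqrt (∑ i, ((q i : ℝ)) ^ 2) := rfl
      _ ≤ Real.sqrt (d * Qr ^ 2) := Real.sqrt_le_sqrt h3
      _ = Real.sqrt d * Qr := by rw [Real.sqrt_mul (by positivity), Real.sqrt_sq hQr0]
  have hK0R : (0:ℝ) ≤ (K : ℝ) := by exact_mod_cast hK0
  have hKbd : ((2 * (2 * K + 1) : ℤ) : ℝ) ≤ 8 * lam := by push_cast; linarith
  have hpow : ((2 * (2 * K + 1) : ℤ) : ℝ) ^ (d - 1) ≤ (8 * lam) ^ (d - 1) := by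
    apply pow_le_pow_left₀ (by push_cast; linarith) hKbd
  have hNlow := (latticeCount_lower lam hlam hd).1
  set N := (latticeCount d lam : ℝ) with hN
  have hlamd : lam * (8 * lam) ^ (d - 1) = 8 ^ (d - 1) * lam ^ d := by
    rw [mul_pow]
    have : lam * lam ^ (d - 1) = lam ^ d := by
      rw [← pow_succ']
      congr 1
      omega
    rw [← mul_assoc, mul_comm lam (8 ^ (d-1) : ℝ), mul_assoc, this]
  calc M * (lam * znorm q)
      ≤ M * (lam * (Real.sqrt d * Qr)) := by
        apply mul_le_mul_of_nonneg_left _ hM0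
        apply mul_le_mul_of_nonneg_left hZ (le_of_lt hlam)
    _ = (lam * Real.sqrt d) * (Qr * M) := by ring
    _ ≤ (lam * Real.sqrt d) * ((8 * lam) ^ (d - 1)) := by
        apply mul_le_mul_of_nonneg_left (hMcR.trans hpow) (by positivity)
    _ = Real.sqrt d * (lam * (8 * lam) ^ (d - 1)) := by ring
    _ = Real.sqrt d * (8 ^ (d - 1) * lam ^ d) := by rw [hlamd]
    _ ≤ Real.sqrt d * (8 ^ (d - 1) * (Real.sqrt d ^ d * N)) := by
        apply mul_le_mul_of_nonneg_left _ (le_of_lt hsd)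
        apply mul_le_mul_of_nonneg_left hNlow (by positivity)
    _ = 8 ^ (d - 1) * Real.sqrt d ^ (d + 1) * N := by
        rw [pow_succ]
        ring
    _ ≤ 8 ^ d * Real.sqrt d ^ (d + 1) * N := by
        have hNn : (0:ℝ) ≤ N := by positivity
        have h8 : (8:ℝ) ^ (d - 1) ≤ 8 ^ d := by
          apply pow_le_pow_right₀ (by norm_num)
          omega
        nlinarith [pow_nonneg (le_of_lt hsd) (d + 1), h8, hNn,
          mul_nonneg (pow_nonneg (le_of_lt hsd) (d+1)) hNn]
    _ = (8 ^ d * Real.sqrt d ^ (d + 1)) * N := by ring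

end QV

/-- quantum variance for matrix elements against an arbitrary probability
measure on the torus. -/
theorem statement12 (d : ℕ) (hd : 2 ≤ d) :
    ∃ C : ℝ, 0 < C ∧ ∀ μ : Measure (Td d), IsProbabilityMeasure μ →
      ∀ a : Td d → ℂ, Continuous a →
      ∀ B : Eigenbasis d, ∀ lam : ℝ, 0 < lam →
        (1 / (latticeCount d lam : ℝ)) *
            (∑' j : ℕ, if B.Λ j ≤ lam then
              ‖(∫ x, a x * ((‖B.ψ j x‖ ^ 2 : ℝ) : ℂ) ∂μ) - ∫ x, a x ∂μ‖ ^ 2 else 0)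
          ≤ (C / lam) * ∑' n : Fin d → ℤ,
              if 1 ≤ znorm n ∧ znorm n ≤ 2 * lam then
                ‖∫ x, a x * conj (eChar n x) ∂μ‖ ^ 2 / znorm (primPart n) else 0 := by
  classical
  have hd0 : 0 < d := by omega
  have hsd : (0:ℝ) < Real.sqrt d := Real.sqrt_pos.2 (by exact_mod_cast hd0)
  refine ⟨8 ^ d * Real.sqrt d ^ (d + 1), by positivity, ?_⟩
  intro μ hμ a ha B lam hlam
  have hN1 : (1:ℝ) ≤ (latticeCount d lam : ℝ) := by
    exact_mod_cast (QV.latticeCount_lower lam hlam hd0).2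
  have hN0 : (0:ℝ) < (latticeCount d lam : ℝ) := by linarith
  set F : (Fin d → ℤ) → ℂ := fun n => ∫ x, a x * conj (eChar n x) ∂μ with hF
  set f : ℕ → ℝ := fun j => if B.Λ j ≤ lam then
      ‖(∫ x, a x * ((‖B.ψ j x‖ ^ 2 : ℝ) : ℂ) ∂μ) - ∫ x, a x ∂μ‖ ^ 2 else 0 with hf
  set X : ℝ := ∑ n ∈ QV.Ann d lam,
      (((QV.box d ⌊lam⌋).filter (fun k => znorm (k + n) = znorm k)).card : ℝ) * ‖F n‖ ^ 2
    with hX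
  have hfnn : ∀ j, 0 ≤ f j := fun j => by
    rw [hf]
    dsimp only
    split <;> positivity
  have hsumX : ∀ s : Finset ℕ, ∑ j ∈ s, f j ≤ X := by
    intro s
    have h1 : ∑ j ∈ s, f j = ∑ j ∈ s.filter (fun j => B.Λ j ≤ lam),
        ‖(∫ x, a x * ((‖B.ψ j x‖ ^ 2 : ℝ) : ℂ) ∂μ) - ∫ x, a x ∂μ‖ ^ 2 :=
      (Finset.sum_filter _ _).symm
    rw [h1]
    calc ∑ j ∈ s.filter (fun j => B.Λ j ≤ lam),
          ‖(∫ x, a x * ((‖B.ψ j x‖ ^ 2 : ℝ) : ℂ) ∂μ) - ∫ x, a x ∂μ‖ ^ 2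
        ≤ ∑ l ∈ QV.ballF d lam, ∑ k ∈ QV.ballF d lam,
            ‖(if znorm l = znorm k ∧ k ≠ l then F (l - k) else 0)‖ ^ 2 :=
          QV.sumJ_le B μ a ha _ (fun j hj => (Finset.mem_filter.1 hj).2)
      _ ≤ X := QV.Treindex F lam
  have hsummable : Summable f := summable_of_sum_le hfnn hsumX
  have htsum : ∑' j, f j ≤ X := hsummable.tsum_le_of_sum_le hsumX
  set R : (Fin d → ℤ) → ℝ := fun n => if 1 ≤ znorm n ∧ znorm n ≤ 2 * lam then
      ‖F n‖ ^ 2 / znorm (primPart n) else 0 with hR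
  have hRtsum : ∑' n, R n = ∑ n ∈ QV.Ann d lam, R n := by
    refine tsum_eq_sum fun n hn => ?_
    rw [hR]
    dsimp only
    rw [if_neg (fun hc => hn (QV.mem_Ann.2 hc))]
  have hpern : ∀ n ∈ QV.Ann d lam,
      (1 / (latticeCount d lam : ℝ)) *
          ((((QV.box d ⌊lam⌋).filter (fun k => znorm (k + n) = znorm k)).card : ℝ) * ‖F n‖ ^ 2)
        ≤ ((8 ^ d * Real.sqrt d ^ (d + 1)) / lam) * R n := by
    intro n hn
    obtain ⟨hn1, hn2⟩ := QV.mem_Ann.1 hn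
    have hn0 : n ≠ 0 := by
      intro h
      rw [h, QV.znorm_zero] at hn1
      linarith
    have hq0 : (0:ℝ) < znorm (primPart n) :=
      lt_of_lt_of_le one_pos (QV.one_le_znorm (QV.primPart_ne_zero hn0))
    have hb := QV.per_n_bound lam hlam hd0 hn1 hn2
    have hRn : R n = ‖F n‖ ^ 2 / znorm (primPart n) := by
      rw [hR]
      dsimp only
      rw [if_pos ⟨hn1, hn2⟩]
    rw [hRn]
    set M := (((QV.box d ⌊lam⌋).filter (fun k => znorm (k + n) = znorm k)).card : ℝ) with hM
    set N := (latticeCount d lam : ℝ) with hN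
    set Cd := (8:ℝ) ^ d * Real.sqrt d ^ (d + 1) with hCd
    set Z := znorm (primPart n) with hZ
    rw [one_div_mul_eq_div, div_mul_div_comm, div_le_div_iff₀ hN0 (by positivity)]
    have h3 := mul_le_mul_of_nonneg_right hb (sq_nonneg ‖F n‖)
    calc M * ‖F n‖ ^ 2 * (lam * Z) = (M * (lam * Z)) * ‖F n‖ ^ 2 := by ring
      _ ≤ (Cd * N) * ‖F n‖ ^ 2 := h3
      _ = Cd * ‖F n‖ ^ 2 * N := by ring
  calc (1 / (latticeCount d lam : ℝ)) * ∑' j, f j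
      ≤ (1 / (latticeCount d lam : ℝ)) * X := by
        apply mul_le_mul_of_nonneg_left htsum (by positivity)
    _ = ∑ n ∈ QV.Ann d lam, (1 / (latticeCount d lam : ℝ)) *
          ((((QV.box d ⌊lam⌋).filter (fun k => znorm (k + n) = znorm k)).card : ℝ) * ‖F n‖ ^ 2) := by
        rw [hX, Finset.mul_sum]
    _ ≤ ∑ n ∈ QV.Ann d lam, ((8 ^ d * Real.sqrt d ^ (d + 1)) / lam) * R n :=
        Finset.sum_le_sum hpern
    _ = ((8 ^ d * Real.sqrt d ^ (d + 1)) / lam) * ∑ n ∈ QV.Ann d lam, R n :=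
        (Finset.mul_sum _ _ _).symm
    _ = ((8 ^ d * Real.sqrt d ^ (d + 1)) / lam) * ∑' n, R n := by rw [hRtsum]
end
end

section
/- For every δ ∈ (0,1) there exists a constant C > 0 such that for every positive integer N, the number of integers E with 1 ≤ E ≤ N for which there exist k, l ∈ ℤ² with k ≠ l, ‖k‖² = ‖l‖² = E, and ‖k − l‖ ≤ E^{(1−δ)/2} is at most C · N^{1−δ/3}. -/
open MeasureTheory Real BigOperators ComplexConjugate

noncomputable section

lemma bez (p₀ p₁ m₀ m₁ : ℤ) (hc : IsCoprime p₀ p₁) (h : p₀*m₀ + p₁*m₁ = 0) :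
    ∃ t : ℤ, m₀ = -t*p₁ ∧ m₁ = t*p₀ := by
  obtain ⟨x, y, hxy⟩ := hc
  exact ⟨x*m₁ - y*m₀, by linear_combination (-m₀)*hxy + x*h, by linear_combination (-m₁)*hxy + y*h⟩

lemma maxmul (u v : ℤ) (h : ¬(u = 0 ∧ v = 0)) :
    max 1 |u| * max 1 |v| ≤ u^2 + v^2 := by
  rcases eq_or_ne u 0 with hu | hu
  · rcases eq_or_ne v 0 with hv | hv
    · exact absurd ⟨hu, hv⟩ h
    · have h1 : 1 ≤ |v| := Int.one_le_abs hv
      subst hu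
      rw [abs_zero, max_eq_left (by norm_num : (0:ℤ) ≤ 1), max_eq_right h1, one_mul]
      nlinarith [sq_abs v]
  · rcases eq_or_ne v 0 with hv | hv
    · have h1 : 1 ≤ |u| := Int.one_le_abs hu
      subst hv
      rw [abs_zero, max_eq_right h1, max_eq_left (by norm_num : (0:ℤ) ≤ 1), mul_one]
      nlinarith [sq_abs u]
    · have h1 : 1 ≤ |u| := Int.one_le_abs hu
      have h2 : 1 ≤ |v| := Int.one_le_abs hv
      rw [max_eq_right h1, max_eq_right h2]
      nlinarith [sq_abs u, sq_abs v, sq_nonneg (|u| - |v|)]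

lemma harm (m : ℕ) : ∑ b ∈ Finset.range (m+1), (max 1 (b:ℝ))⁻¹ ≤ 2 + Real.log m := by
  induction m with
  | zero =>
    have : Real.log 0 = 0 := Real.log_zero
    simp only [Nat.cast_zero, this]
    rw [Finset.sum_range_one]
    norm_num
  | succ m ih =>
    rw [Finset.sum_range_succ]
    have hmax : (max 1 ((m+1:ℕ):ℝ))⁻¹ = ((m:ℝ)+1)⁻¹ := by
      push_cast
      rw [max_eq_right (by linarith [Nat.cast_nonneg (α := ℝ) m])]
    rw [hmax]
    rcases Nat.eq_zero_or_pos m with hm | hm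
    · subst hm
      rw [Finset.sum_range_one]
      norm_num
    · have hm0 : (0:ℝ) < m := by exact_mod_cast hm
      have hlog : ((m:ℝ)+1)⁻¹ ≤ Real.log ((m:ℝ)+1) - Real.log m := by
        rw [← Real.log_div (by positivity) (by positivity)]
        have h2 : Real.log ((m:ℝ)/((m:ℝ)+1)) ≤ (m:ℝ)/((m:ℝ)+1) - 1 :=
          Real.log_le_sub_one_of_pos (by positivity)
        have hdiv : ((m:ℝ)+1)/(m:ℝ) = ((m:ℝ)/((m:ℝ)+1))⁻¹ := by
          rw [inv_div]
        rw [hdiv, Real.log_inv]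
        have h3 : 1 - (m:ℝ)/((m:ℝ)+1) = ((m:ℝ)+1)⁻¹ := by field_simp; ring
        linarith
      have : ((m+1:ℕ):ℝ) = (m:ℝ)+1 := by push_cast; ring
      rw [this]
      linarith

lemma sumw (B : ℤ) (hB : 0 ≤ B) :
    ∑ a ∈ Finset.Icc (-B) B, (max 1 |(a:ℝ)|)⁻¹ ≤ 2 * (2 + Real.log B.toNat) := by
  have hsub : Finset.Icc (-B) B ⊆
      (Finset.range (B.toNat+1)).biUnion (fun n => {(n:ℤ), -(n:ℤ)}) := by
    intro a ha
    rw [Finset.mem_Icc] at ha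
    rw [Finset.mem_biUnion]
    refine ⟨a.natAbs, ?_, ?_⟩
    · rw [Finset.mem_range]
      omega
    · simp only [Finset.mem_insert, Finset.mem_singleton]
      rcases Int.natAbs_eq a with h | h
      · left; omega
      · right; omega
  have hstep : ∑ a ∈ Finset.Icc (-B) B, (max 1 |(a:ℝ)|)⁻¹ ≤
      ∑ a ∈ (Finset.range (B.toNat+1)).biUnion (fun n => {(n:ℤ), -(n:ℤ)}), (max 1 |(a:ℝ)|)⁻¹ := by
    apply Finset.sum_le_sum_of_subset_of_nonneg hsub
    intro i _ _
    positivity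
  have hdisj : ∀ x ∈ Finset.range (B.toNat+1), ∀ y ∈ Finset.range (B.toNat+1), x ≠ y →
      Disjoint ({(x:ℤ), -(x:ℤ)} : Finset ℤ) {(y:ℤ), -(y:ℤ)} := by
    intro x _ y _ hxy
    rw [Finset.disjoint_left]
    intro a hax hay
    simp only [Finset.mem_insert, Finset.mem_singleton] at hax hay
    omega
  rw [Finset.sum_biUnion hdisj] at hstep
  have hsum2 : ∀ n ∈ Finset.range (B.toNat+1),
      ∑ a ∈ ({(n:ℤ), -(n:ℤ)} : Finset ℤ), (max 1 |(a:ℝ)|)⁻¹ ≤ 2 * (max 1 (n:ℝ))⁻¹ := by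
    intro n _
    have habs : ∀ m : ℤ, m.natAbs = n → (max 1 |(m:ℝ)|)⁻¹ = (max 1 (n:ℝ))⁻¹ := by
      intro m hm
      rw [← hm, Nat.cast_natAbs, Int.cast_abs]
    rcases Nat.eq_zero_or_pos n with hn | hn
    · subst hn
      norm_num
    · have hne : (n:ℤ) ≠ -(n:ℤ) := by omega
      rw [Finset.sum_pair hne, habs (n:ℤ) (by simp), habs (-(n:ℤ)) (by simp)]
      ring_nf
      linarith [inv_nonneg.mpr (le_max_iff.mpr (Or.inl (zero_le_one)) : (0:ℝ) ≤ max 1 (n:ℝ))]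
  calc ∑ a ∈ Finset.Icc (-B) B, (max 1 |(a:ℝ)|)⁻¹
      ≤ ∑ n ∈ Finset.range (B.toNat+1), ∑ a ∈ ({(n:ℤ), -(n:ℤ)} : Finset ℤ), (max 1 |(a:ℝ)|)⁻¹ := hstep
    _ ≤ ∑ n ∈ Finset.range (B.toNat+1), 2 * (max 1 (n:ℝ))⁻¹ := Finset.sum_le_sum hsum2
    _ = 2 * ∑ n ∈ Finset.range (B.toNat+1), (max 1 (n:ℝ))⁻¹ := by rw [Finset.mul_sum]
    _ ≤ 2 * (2 + Real.log B.toNat) := by linarith [harm B.toNat]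

lemma cardGT (X Y : ℝ) (hX : 0 ≤ X) (hXY : X ≤ Y) (p₀ p₁ : ℤ) :
    ((Finset.Icc (1:ℤ) ⌊Real.sqrt (X / ((p₀^2+p₁^2 : ℤ):ℝ))⌋).card : ℝ) *
    ((Finset.Icc (-(⌊Real.sqrt (Y / ((p₀^2+p₁^2:ℤ):ℝ))⌋)) ⌊Real.sqrt (Y / ((p₀^2+p₁^2:ℤ):ℝ))⌋).card : ℝ)
    ≤ 3 * Real.sqrt X * Real.sqrt Y * ((max 1 |(p₀:ℝ)|)⁻¹ * (max 1 |(p₁:ℝ)|)⁻¹) := by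
  have hY : 0 ≤ Y := le_trans hX hXY
  have hRHS : 0 ≤ 3 * Real.sqrt X * Real.sqrt Y * ((max 1 |(p₀:ℝ)|)⁻¹ * (max 1 |(p₁:ℝ)|)⁻¹) := by
    have h1 : (0:ℝ) < max 1 |(p₀:ℝ)| := lt_max_of_lt_left one_pos
    have h2 : (0:ℝ) < max 1 |(p₁:ℝ)| := lt_max_of_lt_left one_pos
    positivity
  by_cases hp : p₀ = 0 ∧ p₁ = 0
  · obtain ⟨h0, h1⟩ := hp
    subst h0; subst h1
    norm_num
    positivity
  · have hq1 : (1:ℝ) ≤ ((p₀^2+p₁^2 : ℤ):ℝ) := by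
      have : (1:ℤ) ≤ p₀^2+p₁^2 := by
        rcases not_and_or.mp hp with h | h
        · nlinarith [sq_nonneg p₁, sq_abs p₀, Int.one_le_abs h]
        · nlinarith [sq_nonneg p₀, sq_abs p₁, Int.one_le_abs h]
      exact_mod_cast this
    set q : ℝ := ((p₀^2+p₁^2 : ℤ):ℝ) with hqdef
    have hq0 : 0 < q := lt_of_lt_of_le one_pos hq1
    by_cases hqX : X < q
    · have hz : Real.sqrt (X / q) < 1 := by
        rw [show (1:ℝ) = Real.sqrt 1 by rw [Real.sqrt_one]]
        exact Real.sqrt_lt_sqrt (by positivity) (by rw [div_lt_one hq0] at *; linarith)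
      have hfl : ⌊Real.sqrt (X / q)⌋ < 1 := by
        rw [Int.floor_lt]; exact_mod_cast hz
      rw [Finset.Icc_eq_empty (by omega)]
      simpa using hRHS
    · push_neg at hqX
      have hYq : (1:ℝ) ≤ Real.sqrt (Y / q) := by
        rw [show (1:ℝ) = Real.sqrt 1 by rw [Real.sqrt_one]]
        apply Real.sqrt_le_sqrt
        rw [le_div_iff₀ hq0]
        linarith
      have hcardG : ((Finset.Icc (1:ℤ) ⌊Real.sqrt (X / q)⌋).card : ℝ) ≤ Real.sqrt (X / q) := by
        rw [Int.card_Icc]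
        have h1 : (0:ℝ) ≤ Real.sqrt (X / q) := Real.sqrt_nonneg _
        have h2 : 0 ≤ ⌊Real.sqrt (X / q)⌋ := Int.floor_nonneg.mpr h1
        have : ((⌊Real.sqrt (X / q)⌋ + 1 - 1).toNat : ℝ) = (⌊Real.sqrt (X / q)⌋ : ℝ) := by
          rw [show ⌊Real.sqrt (X / q)⌋ + 1 - 1 = ⌊Real.sqrt (X / q)⌋ by ring]
          exact_mod_cast Int.toNat_of_nonneg h2
        rw [this]
        exact Int.floor_le _
      have hcardT : ((Finset.Icc (-(⌊Real.sqrt (Y / q)⌋)) ⌊Real.sqrt (Y / q)⌋).card : ℝ) ≤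
          3 * Real.sqrt (Y / q) := by
        rw [Int.card_Icc]
        have h2 : 1 ≤ ⌊Real.sqrt (Y / q)⌋ := Int.le_floor.mpr (by exact_mod_cast hYq)
        have h3 : ((⌊Real.sqrt (Y / q)⌋ + 1 - -(⌊Real.sqrt (Y / q)⌋)).toNat : ℝ)
            = 2*(⌊Real.sqrt (Y / q)⌋:ℝ) + 1 := by
          rw [show ⌊Real.sqrt (Y / q)⌋ + 1 - -(⌊Real.sqrt (Y / q)⌋) = 2*⌊Real.sqrt (Y / q)⌋+1 by ring]
          have h6 := Int.toNat_of_nonneg (by omega : (0:ℤ) ≤ 2*⌊Real.sqrt (Y / q)⌋+1)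
          exact_mod_cast h6
        rw [h3]
        have h4 : (⌊Real.sqrt (Y / q)⌋ : ℝ) ≤ Real.sqrt (Y / q) := Int.floor_le _
        linarith
      have hmm : q⁻¹ ≤ (max 1 |(p₀:ℝ)|)⁻¹ * (max 1 |(p₁:ℝ)|)⁻¹ := by
        have h1 : (0:ℝ) < max 1 |(p₀:ℝ)| := lt_max_of_lt_left one_pos
        have h2 : (0:ℝ) < max 1 |(p₁:ℝ)| := lt_max_of_lt_left one_pos
        rw [← mul_inv]
        apply inv_anti₀ (by positivity)
        have := maxmul p₀ p₁ hp
        have hcast : (max 1 |(p₀:ℝ)|) * (max 1 |(p₁:ℝ)|) ≤ q := by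
          rw [hqdef]
          push_cast
          exact_mod_cast this
        exact hcast
      calc ((Finset.Icc (1:ℤ) ⌊Real.sqrt (X / q)⌋).card : ℝ) *
            ((Finset.Icc (-(⌊Real.sqrt (Y / q)⌋)) ⌊Real.sqrt (Y / q)⌋).card : ℝ)
          ≤ Real.sqrt (X / q) * (3 * Real.sqrt (Y / q)) := by
            apply mul_le_mul hcardG hcardT (Nat.cast_nonneg _) (Real.sqrt_nonneg _)
        _ = 3 * Real.sqrt X * Real.sqrt Y * (q⁻¹) := by
            rw [Real.sqrt_div hX, Real.sqrt_div hY]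
            have h1 : Real.sqrt q * Real.sqrt q = q := Real.mul_self_sqrt hq0.le
            have h2 : (0:ℝ) < Real.sqrt q := Real.sqrt_pos.mpr hq0
            field_simp
            rw [Real.sq_sqrt hq0.le]; ring
        _ ≤ _ := by
            apply mul_le_mul_of_nonneg_left hmm
            positivity

set_option maxHeartbeats 1000000 in
lemma keylem (δ : ℝ) (hδ0 : 0 < δ) (hδ1 : δ < 1) (N : ℕ) (hN : 0 < N) (E : ℕ)
    (hE1 : 1 ≤ E) (hEN : E ≤ N)
    (hwit : ∃ k l : Fin 2 → ℤ, k ≠ l ∧ znorm k ^ 2 = (E:ℝ) ∧ znorm l ^ 2 = (E:ℝ) ∧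
      znorm (k - l) ≤ (E : ℝ) ^ ((1 - δ) / 2)) :
    ∃ G p₀ p₁ t : ℤ,
      G ∈ Finset.Icc (1:ℤ) ⌊Real.sqrt ((N:ℝ)^(1-δ) / ((p₀^2+p₁^2:ℤ):ℝ))⌋ ∧
      t ∈ Finset.Icc (-(⌊Real.sqrt ((4*(N:ℝ)) / ((p₀^2+p₁^2:ℤ):ℝ))⌋))
          ⌊Real.sqrt ((4*(N:ℝ)) / ((p₀^2+p₁^2:ℤ):ℝ))⌋ ∧
      p₀ ∈ Finset.Icc (-(⌊Real.sqrt ((N:ℝ)^(1-δ))⌋)) ⌊Real.sqrt ((N:ℝ)^(1-δ))⌋ ∧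
      p₁ ∈ Finset.Icc (-(⌊Real.sqrt ((N:ℝ)^(1-δ))⌋)) ⌊Real.sqrt ((N:ℝ)^(1-δ))⌋ ∧
      4*(E:ℤ) = (G^2+t^2)*(p₀^2+p₁^2) := by
  obtain ⟨k, l, hkl, hk, hl, hd⟩ := hwit
  have hX0 : (0:ℝ) ≤ (N:ℝ)^(1-δ) := Real.rpow_nonneg (Nat.cast_nonneg N) _
  have hkR : ((k 0:ℤ):ℝ)^2 + ((k 1:ℤ):ℝ)^2 = (E:ℝ) := by
    have h := hk
    unfold znorm at h
    rw [Real.sq_sqrt (by positivity), Fin.sum_univ_two] at h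
    exact h
  have hlR : ((l 0:ℤ):ℝ)^2 + ((l 1:ℤ):ℝ)^2 = (E:ℝ) := by
    have h := hl
    unfold znorm at h
    rw [Real.sq_sqrt (by positivity), Fin.sum_univ_two] at h
    exact h
  have hkZ : (k 0)^2 + (k 1)^2 = (E:ℤ) := by exact_mod_cast hkR
  have hlZ : (l 0)^2 + (l 1)^2 = (E:ℤ) := by exact_mod_cast hlR
  have hUV : ((k 0 : ℝ) - (l 0 : ℝ))^2 + ((k 1 : ℝ) - (l 1 : ℝ))^2 ≤ (N:ℝ)^(1-δ) := by
    have h1 : znorm (k-l)^2 ≤ ((E:ℝ)^((1-δ)/2))^2 :=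
      pow_le_pow_left₀ (Real.sqrt_nonneg _) hd 2
    have h2 : znorm (k-l)^2 = ((k 0 : ℝ) - (l 0 : ℝ))^2 + ((k 1 : ℝ) - (l 1 : ℝ))^2 := by
      unfold znorm
      rw [Real.sq_sqrt (by positivity), Fin.sum_univ_two]
      simp only [Pi.sub_apply]
      push_cast
      ring
    have h3 : ((E:ℝ)^((1-δ)/2))^2 = (E:ℝ)^(1-δ) := by
      rw [← Real.rpow_natCast ((E:ℝ)^((1-δ)/2)) 2, ← Real.rpow_mul (Nat.cast_nonneg E)]
      norm_num
    have h4 : (E:ℝ)^(1-δ) ≤ (N:ℝ)^(1-δ) :=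
      Real.rpow_le_rpow (Nat.cast_nonneg E) (Nat.cast_le.mpr hEN) (by linarith)
    rw [h2, h3] at h1
    linarith
  have hne : ¬(k 0 - l 0 = 0 ∧ k 1 - l 1 = 0) := by
    rintro ⟨h1, h2⟩
    apply hkl
    funext i
    fin_cases i
    · exact sub_eq_zero.mp h1
    · exact sub_eq_zero.mp h2
  have hgpos : 0 < Int.gcd (k 0 - l 0) (k 1 - l 1) :=
    Int.gcd_pos_iff.mpr (not_and_or.mp hne |>.imp id id)
  set G : ℤ := (Int.gcd (k 0 - l 0) (k 1 - l 1) : ℤ) with hGdef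
  have hG1 : 1 ≤ G := by rw [hGdef]; exact_mod_cast hgpos
  set p₀ : ℤ := (k 0 - l 0) / G with hp0def
  set p₁ : ℤ := (k 1 - l 1) / G with hp1def
  have hu : G * p₀ = k 0 - l 0 := Int.mul_ediv_cancel' (Int.gcd_dvd_left _ _)
  have hv : G * p₁ = k 1 - l 1 := Int.mul_ediv_cancel' (Int.gcd_dvd_right _ _)
  have hcop : IsCoprime p₀ p₁ :=
    Int.isCoprime_iff_gcd_eq_one.mpr (Int.gcd_div_gcd_div_gcd hgpos)
  have horth : p₀ * (k 0 + l 0) + p₁ * (k 1 + l 1) = 0 := by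
    have h0 : G * (p₀ * (k 0 + l 0) + p₁ * (k 1 + l 1)) = 0 := by
      linear_combination (k 0 + l 0)*hu + (k 1 + l 1)*hv + hkZ - hlZ
    rcases mul_eq_zero.mp h0 with h | h
    · exfalso; omega
    · exact h
  obtain ⟨t, ht0, ht1⟩ := bez p₀ p₁ (k 0 + l 0) (k 1 + l 1) hcop horth
  have hpne : ¬(p₀ = 0 ∧ p₁ = 0) := by
    rintro ⟨h1, h2⟩
    apply hne
    constructor
    · rw [← hu, h1, mul_zero]
    · rw [← hv, h2, mul_zero]
  have hq1 : 1 ≤ p₀^2 + p₁^2 := by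
    rcases not_and_or.mp hpne with h | h
    · nlinarith [sq_abs p₀, Int.one_le_abs h, sq_nonneg p₁, abs_nonneg p₀]
    · nlinarith [sq_abs p₁, Int.one_le_abs h, sq_nonneg p₀, abs_nonneg p₁]
  have hcast : ((p₀^2+p₁^2 : ℤ):ℝ) = (p₀:ℝ)^2+(p₁:ℝ)^2 := by push_cast; ring
  have hq0R : (0:ℝ) < (p₀:ℝ)^2+(p₁:ℝ)^2 := by
    rw [← hcast]; exact_mod_cast lt_of_lt_of_le one_pos hq1
  have hq1R : (1:ℝ) ≤ (p₀:ℝ)^2+(p₁:ℝ)^2 := by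
    rw [← hcast]; exact_mod_cast hq1
  have hGqR : (G:ℝ)^2 * ((p₀:ℝ)^2+(p₁:ℝ)^2) ≤ (N:ℝ)^(1-δ) := by
    have hZ : G^2*(p₀^2+p₁^2) = (k 0 - l 0)^2 + (k 1 - l 1)^2 := by
      linear_combination (G*p₀ + (k 0 - l 0))*hu + (G*p₁ + (k 1 - l 1))*hv
    have := congrArg (fun z : ℤ => (z:ℝ)) hZ
    push_cast at this
    linarith
  have htqR : (t:ℝ)^2 * ((p₀:ℝ)^2+(p₁:ℝ)^2) ≤ 4*(N:ℝ) := by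
    have hZ : t^2*(p₀^2+p₁^2) = (k 0 + l 0)^2 + (k 1 + l 1)^2 := by
      linear_combination (t*p₁ - (k 0 + l 0))*ht0 - ((k 1 + l 1) + t*p₀)*ht1
    have hZ2 : (k 0 + l 0)^2 + (k 1 + l 1)^2 ≤ 4*(E:ℤ) := by
      nlinarith [hkZ, hlZ, sq_nonneg (k 0 - l 0), sq_nonneg (k 1 - l 1)]
    have h3 : t^2*(p₀^2+p₁^2) ≤ 4*(E:ℤ) := hZ ▸ hZ2
    have h4 := congrArg (fun z : ℤ => (z:ℝ)) hZ
    have h5 : ((t^2*(p₀^2+p₁^2) : ℤ):ℝ) ≤ 4*(E:ℝ) := by exact_mod_cast h3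
    have h6 : 4*(E:ℝ) ≤ 4*(N:ℝ) := by
      have : (E:ℝ) ≤ (N:ℝ) := by exact_mod_cast hEN
      linarith
    push_cast at h5
    linarith
  have hqXR : (p₀:ℝ)^2+(p₁:ℝ)^2 ≤ (N:ℝ)^(1-δ) := by
    have hG2 : (1:ℝ) ≤ (G:ℝ)^2 := by
      have : (1:ℝ) ≤ (G:ℝ) := by exact_mod_cast hG1
      nlinarith
    nlinarith [hq0R]
  have hG0R : (0:ℝ) ≤ (G:ℝ) := by
    have : (1:ℝ) ≤ (G:ℝ) := by exact_mod_cast hG1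
    linarith
  have mem_of_abs : ∀ z : ℤ, |(z:ℝ)| ≤ Real.sqrt ((N:ℝ)^(1-δ)) →
      z ∈ Finset.Icc (-(⌊Real.sqrt ((N:ℝ)^(1-δ))⌋)) ⌊Real.sqrt ((N:ℝ)^(1-δ))⌋ := by
    intro z hz
    rw [Finset.mem_Icc]
    constructor
    · rw [neg_le]
      apply Int.le_floor.mpr
      rw [Int.cast_neg]
      linarith [neg_abs_le ((z:ℝ))]
    · exact Int.le_floor.mpr (le_trans (le_abs_self _) hz)
  refine ⟨G, p₀, p₁, t, ?_, ?_, ?_, ?_, ?_⟩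
  · rw [Finset.mem_Icc]
    refine ⟨hG1, Int.le_floor.mpr ?_⟩
    rw [hcast]
    have hG2 : (G:ℝ)^2 ≤ (N:ℝ)^(1-δ) / ((p₀:ℝ)^2+(p₁:ℝ)^2) := by
      rw [le_div_iff₀ hq0R]
      linarith
    calc (G:ℝ) = Real.sqrt ((G:ℝ)^2) := (Real.sqrt_sq hG0R).symm
      _ ≤ _ := Real.sqrt_le_sqrt hG2
  · rw [Finset.mem_Icc]
    have ht2 : |(t:ℝ)| ≤ Real.sqrt (4*(N:ℝ) / ((p₀:ℝ)^2+(p₁:ℝ)^2)) := by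
      have h1 : (t:ℝ)^2 ≤ 4*(N:ℝ) / ((p₀:ℝ)^2+(p₁:ℝ)^2) := by
        rw [le_div_iff₀ hq0R]
        linarith
      calc |(t:ℝ)| = Real.sqrt ((t:ℝ)^2) := (Real.sqrt_sq_eq_abs _).symm
        _ ≤ _ := Real.sqrt_le_sqrt h1
    rw [hcast]
    constructor
    · rw [neg_le]
      apply Int.le_floor.mpr
      rw [Int.cast_neg]
      linarith [neg_abs_le ((t:ℝ))]
    · exact Int.le_floor.mpr (le_trans (le_abs_self _) ht2)
  · apply mem_of_abs
    have h1 : (p₀:ℝ)^2 ≤ (N:ℝ)^(1-δ) := by nlinarith [sq_nonneg ((p₁:ℝ))]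
    calc |(p₀:ℝ)| = Real.sqrt ((p₀:ℝ)^2) := (Real.sqrt_sq_eq_abs _).symm
      _ ≤ _ := Real.sqrt_le_sqrt h1
  · apply mem_of_abs
    have h1 : (p₁:ℝ)^2 ≤ (N:ℝ)^(1-δ) := by nlinarith [sq_nonneg ((p₀:ℝ))]
    calc |(p₁:ℝ)| = Real.sqrt ((p₁:ℝ)^2) := (Real.sqrt_sq_eq_abs _).symm
      _ ≤ _ := Real.sqrt_le_sqrt h1
  · have h2a : 2*(k 0) = G*p₀ - t*p₁ := by linear_combination ht0 - hu
    have h2b : 2*(k 1) = G*p₁ + t*p₀ := by linear_combination ht1 - hv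
    linear_combination (-4)*hkZ + (2*(k 0) + G*p₀ - t*p₁)*h2a + (2*(k 1) + G*p₁ + t*p₀)*h2b

set_option maxHeartbeats 1000000 in
/-- Bourgain–Rudnick separation lemma for lattice points on circles. -/
theorem statement13 (δ : ℝ) (hδ0 : 0 < δ) (hδ1 : δ < 1) :
    ∃ C : ℝ, 0 < C ∧ ∀ N : ℕ, 0 < N →
      (Set.ncard {E : ℕ | 1 ≤ E ∧ E ≤ N ∧ ∃ k l : Fin 2 → ℤ, k ≠ l ∧
          znorm k ^ 2 = E ∧ znorm l ^ 2 = E ∧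
          znorm (k - l) ≤ (E : ℝ) ^ ((1 - δ) / 2)} : ℝ)
        ≤ C * (N : ℝ) ^ (1 - δ / 3) := by
  refine ⟨6*(4+24/δ)^2, by positivity, ?_⟩
  intro N hN
  set S : Set ℕ := {E : ℕ | 1 ≤ E ∧ E ≤ N ∧ ∃ k l : Fin 2 → ℤ, k ≠ l ∧
      znorm k ^ 2 = E ∧ znorm l ^ 2 = E ∧
      znorm (k - l) ≤ (E : ℝ) ^ ((1 - δ) / 2)} with hSdef
  have hN1 : (1:ℝ) ≤ (N:ℝ) := by exact_mod_cast hN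
  have hN0 : (0:ℝ) < (N:ℝ) := by linarith
  set X : ℝ := (N:ℝ)^(1-δ) with hXdef
  set Y : ℝ := 4*(N:ℝ) with hYdef
  have hX0 : (0:ℝ) ≤ X := Real.rpow_nonneg (by positivity) _
  have hXN : X ≤ (N:ℝ) := by
    calc X ≤ (N:ℝ)^(1:ℝ) := Real.rpow_le_rpow_of_exponent_le hN1 (by linarith)
      _ = (N:ℝ) := Real.rpow_one _
  have hXY : X ≤ Y := by rw [hYdef]; linarith
  set B : ℤ := ⌊Real.sqrt X⌋ with hBdef
  have hB0 : 0 ≤ B := Int.floor_nonneg.mpr (Real.sqrt_nonneg _)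
  set W : Finset (ℤ×ℤ×ℤ×ℤ) := (Finset.Icc (-B) B ×ˢ Finset.Icc (-B) B).biUnion (fun p =>
    ((Finset.Icc (1:ℤ) ⌊Real.sqrt (X / ((p.1^2+p.2^2:ℤ):ℝ))⌋) ×ˢ
     (Finset.Icc (-(⌊Real.sqrt (Y / ((p.1^2+p.2^2:ℤ):ℝ))⌋))
        ⌊Real.sqrt (Y / ((p.1^2+p.2^2:ℤ):ℝ))⌋)).image
     (fun gt => (gt.1, p.1, p.2, gt.2))) with hWdef
  have key : ∀ E ∈ S, ∃ w : ℤ×ℤ×ℤ×ℤ, w ∈ W ∧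
      4*(E:ℤ) = (w.1^2 + w.2.2.2^2)*(w.2.1^2 + w.2.2.1^2) := by
    intro E hE
    obtain ⟨hE1, hEN, hwit⟩ := hE
    obtain ⟨G, p₀, p₁, t, hG, ht, hp0, hp1, hid⟩ :=
      keylem δ hδ0 hδ1 N hN E hE1 hEN hwit
    refine ⟨(G, p₀, p₁, t), ?_, by simpa using hid⟩
    rw [hWdef, Finset.mem_biUnion]
    refine ⟨(p₀, p₁), ?_, ?_⟩
    · rw [Finset.mem_product]
      exact ⟨hp0, hp1⟩
    · rw [Finset.mem_image]
      exact ⟨(G, t), by rw [Finset.mem_product]; exact ⟨hG, ht⟩, rfl⟩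
  -- injection
  classical
  set F : ℕ → ℤ×ℤ×ℤ×ℤ := fun E =>
    if h : ∃ w : ℤ×ℤ×ℤ×ℤ, w ∈ W ∧ 4*(E:ℤ) = (w.1^2 + w.2.2.2^2)*(w.2.1^2 + w.2.2.1^2)
    then h.choose else (0,0,0,0) with hFdef
  have hFspec : ∀ E ∈ S, F E ∈ W ∧
      4*(E:ℤ) = ((F E).1^2 + (F E).2.2.2^2)*((F E).2.1^2 + (F E).2.2.1^2) := by
    intro E hE
    have h := key E hE
    rw [hFdef]
    simp only [dif_pos h]
    exact h.choose_spec
  have hmaps : Set.MapsTo F S (↑W : Set (ℤ×ℤ×ℤ×ℤ)) := fun E hE => (hFspec E hE).1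
  have hinj : Set.InjOn F S := by
    intro E hE E' hE' heq
    have h1 := (hFspec E hE).2
    have h2 := (hFspec E' hE').2
    rw [heq] at h1
    have : (E:ℤ) = (E':ℤ) := by omega
    exact_mod_cast this
  have hcard1 : Set.ncard S ≤ W.card := by
    calc Set.ncard S = Set.ncard (F '' S) := (Set.ncard_image_of_injOn hinj).symm
      _ ≤ Set.ncard (↑W : Set (ℤ×ℤ×ℤ×ℤ)) :=
          Set.ncard_le_ncard (Set.image_subset_iff.mpr hmaps) (W.finite_toSet)
      _ = W.card := Set.ncard_coe_finset W
  -- counting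
  have hcard2 : (W.card : ℝ) ≤ 3 * Real.sqrt X * Real.sqrt Y *
      (∑ a ∈ Finset.Icc (-B) B, (max 1 |(a:ℝ)|)⁻¹)^2 := by
    have s1 : W.card ≤ ∑ p ∈ (Finset.Icc (-B) B ×ˢ Finset.Icc (-B) B),
        (Finset.Icc (1:ℤ) ⌊Real.sqrt (X / ((p.1^2+p.2^2:ℤ):ℝ))⌋).card *
        (Finset.Icc (-(⌊Real.sqrt (Y / ((p.1^2+p.2^2:ℤ):ℝ))⌋))
          ⌊Real.sqrt (Y / ((p.1^2+p.2^2:ℤ):ℝ))⌋).card := by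
      rw [hWdef]
      refine le_trans Finset.card_biUnion_le (Finset.sum_le_sum ?_)
      intro p _
      refine le_trans Finset.card_image_le ?_
      rw [Finset.card_product]
    have s2 : (W.card : ℝ) ≤ ∑ p ∈ (Finset.Icc (-B) B ×ˢ Finset.Icc (-B) B),
        ((Finset.Icc (1:ℤ) ⌊Real.sqrt (X / ((p.1^2+p.2^2:ℤ):ℝ))⌋).card : ℝ) *
        ((Finset.Icc (-(⌊Real.sqrt (Y / ((p.1^2+p.2^2:ℤ):ℝ))⌋))
          ⌊Real.sqrt (Y / ((p.1^2+p.2^2:ℤ):ℝ))⌋).card : ℝ) := by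
      exact_mod_cast s1
    refine le_trans s2 ?_
    have s3 : ∑ p ∈ (Finset.Icc (-B) B ×ˢ Finset.Icc (-B) B),
        ((Finset.Icc (1:ℤ) ⌊Real.sqrt (X / ((p.1^2+p.2^2:ℤ):ℝ))⌋).card : ℝ) *
        ((Finset.Icc (-(⌊Real.sqrt (Y / ((p.1^2+p.2^2:ℤ):ℝ))⌋))
          ⌊Real.sqrt (Y / ((p.1^2+p.2^2:ℤ):ℝ))⌋).card : ℝ)
        ≤ ∑ p ∈ (Finset.Icc (-B) B ×ˢ Finset.Icc (-B) B),
          3 * Real.sqrt X * Real.sqrt Y * ((max 1 |(p.1:ℝ)|)⁻¹ * (max 1 |(p.2:ℝ)|)⁻¹) :=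
      Finset.sum_le_sum (fun p _ => cardGT X Y hX0 hXY p.1 p.2)
    refine le_trans s3 (le_of_eq ?_)
    rw [← Finset.mul_sum]
    congr 1
    rw [sq, Finset.sum_mul_sum]
    exact Finset.sum_product (s := Finset.Icc (-B) B) (t := Finset.Icc (-B) B)
      (f := fun p => (max 1 |(p.1:ℝ)|)⁻¹ * (max 1 |(p.2:ℝ)|)⁻¹)
  have hsum : (∑ a ∈ Finset.Icc (-B) B, (max 1 |(a:ℝ)|)⁻¹)^2 ≤ (4+24/δ)^2 * (N:ℝ)^(δ/6) := by
    have h1 := sumw B hB0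
    have hBN : (B.toNat : ℝ) ≤ (N:ℝ) := by
      have e0 : ((B.toNat : ℤ) : ℝ) = (B:ℝ) := by
        rw [Int.toNat_of_nonneg hB0]
      have e1 : (B:ℝ) ≤ Real.sqrt X := Int.floor_le _
      have e2 : Real.sqrt X ≤ (N:ℝ) := by
        calc Real.sqrt X ≤ Real.sqrt ((N:ℝ)^2) := Real.sqrt_le_sqrt (by nlinarith)
          _ = (N:ℝ) := Real.sqrt_sq hN0.le
      have : ((B.toNat : ℤ) : ℝ) ≤ (N:ℝ) := by rw [e0]; linarith
      exact_mod_cast this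
    have hlog : Real.log B.toNat ≤ Real.log N := by
      rcases Nat.eq_zero_or_pos B.toNat with h0 | h0
      · rw [h0]
        norm_num
        exact Real.log_nonneg hN1
      · exact Real.log_le_log (by exact_mod_cast h0) hBN
    have hlogN : Real.log N ≤ (12/δ) * (N:ℝ)^(δ/12) := by
      have := Real.log_le_rpow_div (Nat.cast_nonneg N) (show (0:ℝ) < δ/12 by positivity)
      calc Real.log N ≤ (N:ℝ)^(δ/12) / (δ/12) := this
        _ = (12/δ) * (N:ℝ)^(δ/12) := by field_simp
    have hrp1 : (1:ℝ) ≤ (N:ℝ)^(δ/12) := by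
      rw [show (1:ℝ) = (1:ℝ)^(δ/12) by rw [Real.one_rpow]]
      exact Real.rpow_le_rpow (by norm_num) hN1 (by positivity)
    have h2 : ∑ a ∈ Finset.Icc (-B) B, (max 1 |(a:ℝ)|)⁻¹ ≤ (4+24/δ) * (N:ℝ)^(δ/12) := by
      have : (2:ℝ) * (2 + Real.log B.toNat) ≤ (4+24/δ) * (N:ℝ)^(δ/12) := by
        have c1 : Real.log B.toNat ≤ (12/δ) * (N:ℝ)^(δ/12) := le_trans hlog hlogN
        have expand : (4+24/δ) * (N:ℝ)^(δ/12)
            = 4*(N:ℝ)^(δ/12) + 2*((12/δ) * (N:ℝ)^(δ/12)) := by ring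
        rw [expand]
        linarith
      linarith
    have hnn : (0:ℝ) ≤ ∑ a ∈ Finset.Icc (-B) B, (max 1 |(a:ℝ)|)⁻¹ :=
      Finset.sum_nonneg (fun a _ => by positivity)
    calc (∑ a ∈ Finset.Icc (-B) B, (max 1 |(a:ℝ)|)⁻¹)^2
        ≤ ((4+24/δ) * (N:ℝ)^(δ/12))^2 := by
          apply pow_le_pow_left₀ hnn h2
      _ = (4+24/δ)^2 * ((N:ℝ)^(δ/12))^2 := by ring
      _ = (4+24/δ)^2 * (N:ℝ)^(δ/6) := by
          congr 1
          rw [← Real.rpow_natCast ((N:ℝ)^(δ/12)) 2, ← Real.rpow_mul hN0.le]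
          norm_num
          congr 1
          ring
  have hfin : 3 * Real.sqrt X * Real.sqrt Y * ((4+24/δ)^2 * (N:ℝ)^(δ/6))
      ≤ 6*(4+24/δ)^2 * (N:ℝ)^(1-δ/3) := by
    have e1 : Real.sqrt X = (N:ℝ)^((1-δ)/2) := by
      rw [hXdef, Real.sqrt_eq_rpow, ← Real.rpow_mul hN0.le]
      congr 1
      ring
    have e2 : Real.sqrt Y = 2*(N:ℝ)^((1:ℝ)/2) := by
      rw [hYdef, show (4:ℝ)*(N:ℝ) = (2:ℝ)^2*(N:ℝ) by norm_num,
        Real.sqrt_mul (by positivity), Real.sqrt_sq (by norm_num), Real.sqrt_eq_rpow]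
    have e3 : (N:ℝ)^((1-δ)/2) * (N:ℝ)^((1:ℝ)/2) * (N:ℝ)^(δ/6) = (N:ℝ)^(1-δ/3) := by
      rw [← Real.rpow_add hN0, ← Real.rpow_add hN0]
      congr 1
      ring
    apply le_of_eq
    calc 3 * Real.sqrt X * Real.sqrt Y * ((4+24/δ)^2 * (N:ℝ)^(δ/6))
        = 6*(4+24/δ)^2 * ((N:ℝ)^((1-δ)/2) * (N:ℝ)^((1:ℝ)/2) * (N:ℝ)^(δ/6)) := by
          rw [e1, e2]; ring
      _ = 6*(4+24/δ)^2 * (N:ℝ)^(1-δ/3) := by rw [e3]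
  have hsq : (0:ℝ) ≤ 3 * Real.sqrt X * Real.sqrt Y := by positivity
  calc (Set.ncard S : ℝ) ≤ (W.card : ℝ) := by exact_mod_cast hcard1
    _ ≤ 3 * Real.sqrt X * Real.sqrt Y *
        (∑ a ∈ Finset.Icc (-B) B, (max 1 |(a:ℝ)|)⁻¹)^2 := hcard2
    _ ≤ 3 * Real.sqrt X * Real.sqrt Y * ((4+24/δ)^2 * (N:ℝ)^(δ/6)) :=
        mul_le_mul_of_nonneg_left hsum hsq
    _ ≤ 6*(4+24/δ)^2 * (N:ℝ)^(1-δ/3) := hfin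
end
end

section
/- Let σ(Δ) = {E ∈ ℕ : E is a sum of two squares} be the set of Laplace eigenvalues on 𝕋². There exists a subset S ⊆ σ(Δ) of relative density 1 in σ(Δ) (i.e. #(S ∩ [1,N]) / #(σ(Δ) ∩ [1,N]) → 1 as N → ∞) such that for every continuous function a on 𝕋² and every ε > 0 there exists Λ > 0 with the following property: for every E ∈ S with E ≥ Λ and every L²-normalized Laplace eigenfunction ψ on 𝕋² with eigenvalue E, one has |∫_{𝕋²} a|ψ|² dx − ∫_{𝕋²} a dx| < ε. -/
open MeasureTheory Real BigOperators ComplexConjugate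

noncomputable section

/-- The set of eigenvalues of the Laplacian on `𝕋²`: integers that are sums of two squares. -/
def sumTwoSquares : Set ℕ := {E : ℕ | ∃ a b : ℤ, (E : ℤ) = a ^ 2 + b ^ 2}


/-! ### Auxiliary machinery -/

set_option maxHeartbeats 1600000

section Aux

instance : IsProbabilityMeasure (haarT 2) := by unfold haarT; infer_instance

lemma continuous_eChar {d : ℕ} (n : Fin d → ℤ) : Continuous (eChar n) := by
  unfold eChar
  exact continuous_finset_prod _ fun i _ => (fourier (n i)).continuous.comp (continuous_apply i)

lemma integrable_of_continuous {E : Type*} [NormedAddCommGroup E] [NormedSpace ℝ E]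
    {f : Td 2 → E} (hf : Continuous f) : Integrable f (haarT 2) :=
  hf.integrable_of_hasCompactSupport ((isClosed_tsupport f).isCompact)

lemma integral_fourier_haar (n : ℤ) :
    (∫ x : AddCircle (2*π), fourier n x ∂AddCircle.haarAddCircle) = if n = 0 then 1 else 0 := by
  split_ifs with h
  · subst h; simp_rw [fourier_zero]; simp
  · exact integral_eq_zero_of_add_right_eq_neg (μ := AddCircle.haarAddCircle)
      (fourier_add_half_inv_index h (by positivity))

lemma eChar_apply2 (n : Fin 2 → ℤ) (x : Td 2) :
    eChar n x = fourier (n 0) (x 0) * fourier (n 1) (x 1) := by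
  simp [eChar, Fin.prod_univ_two]

lemma eChar_add {d : ℕ} (m n : Fin d → ℤ) (x : Td d) :
    eChar (m + n) x = eChar m x * eChar n x := by
  unfold eChar
  rw [← Finset.prod_mul_distrib]
  exact Finset.prod_congr rfl fun i _ => by
    simp [Pi.add_apply, ← fourier_add]

lemma eChar_conj {d : ℕ} (n : Fin d → ℤ) (x : Td d) :
    conj (eChar n x) = eChar (-n) x := by
  unfold eChar
  rw [map_prod]
  exact Finset.prod_congr rfl fun i _ => by simp [Pi.neg_apply, fourier_neg]

lemma eChar_zero {d : ℕ} (x : Td d) : eChar (0 : Fin d → ℤ) x = 1 := by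
  unfold eChar; simp [fourier_zero]

lemma integral_eChar (n : Fin 2 → ℤ) :
    (∫ x, eChar n x ∂haarT 2) = if n = 0 then 1 else 0 := by
  have h1 : (∫ x, eChar n x ∂haarT 2)
      = ∫ y : AddCircle (2*π) × AddCircle (2*π),
          fourier (n 0) y.1 * fourier (n 1) y.2
          ∂(AddCircle.haarAddCircle.prod AddCircle.haarAddCircle) := by
    rw [← ((measurePreserving_piFinTwo
      (fun _ : Fin 2 => (AddCircle.haarAddCircle : Measure (AddCircle (2*π))))).integral_comp'
      (fun y => fourier (n 0) y.1 * fourier (n 1) y.2))]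
    simp_rw [eChar_apply2, MeasurableEquiv.piFinTwo_apply]
    rfl
  rw [h1, integral_prod_mul, integral_fourier_haar, integral_fourier_haar]
  by_cases h0 : n 0 = 0 <;> by_cases h1 : n 1 = 0 <;>
    simp [h0, h1, funext_iff, Fin.forall_fin_two]

lemma integral_echar3 (n k l : Fin 2 → ℤ) :
    (∫ x, eChar n x * (eChar k x * conj (eChar l x)) ∂haarT 2)
      = if n + k - l = 0 then 1 else 0 := by
  have hpt : ∀ x, eChar n x * (eChar k x * conj (eChar l x)) = eChar (n + k - l) x := by
    intro x
    rw [eChar_conj, ← eChar_add, ← eChar_add]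
    congr 1
    ring
  rw [integral_congr_ae (Filter.Eventually.of_forall hpt), integral_eChar]

/-! ### Stone–Weierstrass for the torus -/

/-- bundled character -/
def charCM (n : Fin 2 → ℤ) : C(Td 2, ℂ) := ⟨eChar n, continuous_eChar n⟩

def charAlg : StarSubalgebra ℂ C(Td 2, ℂ) where
  toSubalgebra := Algebra.adjoin ℂ (Set.range charCM)
  star_mem' := by
    show Algebra.adjoin ℂ (Set.range charCM) ≤ star (Algebra.adjoin ℂ (Set.range charCM))
    refine Algebra.adjoin_le ?_
    rintro - ⟨n, rfl⟩
    refine Algebra.subset_adjoin ⟨-n, ?_⟩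
    ext x
    show eChar (-n) x = conj (eChar n x)
    rw [eChar_conj]

lemma charAlg_coe :
    Subalgebra.toSubmodule charAlg.toSubalgebra = Submodule.span ℂ (Set.range charCM) := by
  apply Algebra.adjoin_eq_span_of_subset
  refine Set.Subset.trans ?_ Submodule.subset_span
  intro x hx
  refine Submonoid.closure_induction (fun _ => id) ⟨0, ?_⟩ ?_ hx
  · ext1 z; show eChar (0 : Fin 2 → ℤ) z = 1; exact eChar_zero z
  · rintro - - - - ⟨m, rfl⟩ ⟨n, rfl⟩
    refine ⟨m + n, ?_⟩
    ext1 z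
    exact eChar_add m n z

lemma charAlg_sep : charAlg.SeparatesPoints := by
  intro x y hxy
  obtain ⟨i, hi⟩ : ∃ i, x i ≠ y i := by
    by_contra h; push_neg at h; exact hxy (funext h)
  refine ⟨_, ⟨charCM (Pi.single i 1), Algebra.subset_adjoin ⟨Pi.single i 1, rfl⟩, rfl⟩, ?_⟩
  dsimp only
  show eChar (Pi.single i 1) x ≠ eChar (Pi.single i 1) y
  unfold eChar
  have hx : ∀ z : Td 2, ∏ j, fourier ((Pi.single i 1 : Fin 2 → ℤ) j) (z j) = fourier 1 (z i) := by
    intro z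
    rw [Fintype.prod_eq_single i fun j hj => by
      rw [Pi.single_eq_of_ne hj]; exact fourier_zero]
    rw [Pi.single_eq_same]
  rw [hx, hx, fourier_one, fourier_one]
  intro h
  rw [Circle.coe_inj] at h
  exact hi (AddCircle.injective_toCircle (by positivity : (0:ℝ) < 2*π).ne' h)

lemma charAlg_dense : charAlg.topologicalClosure = ⊤ :=
  ContinuousMap.starSubalgebra_topologicalClosure_eq_top_of_separatesPoints charAlg charAlg_sep

/-- trigonometric approximation on the torus -/
lemma exists_trig_approx (a : Td 2 → ℂ) (ha : Continuous a) {ε : ℝ} (hε : 0 < ε) :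
    ∃ p : (Fin 2 → ℤ) →₀ ℂ, ∀ x, ‖a x - ∑ n ∈ p.support, p n * eChar n x‖ < ε := by
  set aCM : C(Td 2, ℂ) := ⟨a, ha⟩
  have haCM : aCM ∈ charAlg.topologicalClosure := by rw [charAlg_dense]; trivial
  rw [← SetLike.mem_coe, StarSubalgebra.topologicalClosure_coe] at haCM
  obtain ⟨P, hPA, hPd⟩ := Metric.mem_closure_iff.1 haCM ε hε
  have hPA' : P ∈ Submodule.span ℂ (Set.range charCM) := by
    rw [← charAlg_coe]
    exact hPA
  rw [Finsupp.mem_span_range_iff_exists_finsupp] at hPA'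
  obtain ⟨p, hp⟩ := hPA'
  refine ⟨p, fun x => ?_⟩
  have : (∑ n ∈ p.support, p n * eChar n x) = P x := by
    rw [← hp, Finsupp.sum, ContinuousMap.sum_apply]
    exact Finset.sum_congr rfl fun n _ => rfl
  rw [this]
  calc ‖a x - P x‖ = ‖(aCM - P) x‖ := rfl
    _ ≤ ‖aCM - P‖ := ContinuousMap.norm_coe_le_norm _ x
    _ < ε := by rwa [← dist_eq_norm]

/-! ### Counting lemmas -/

/-- separation threshold `≈ E^{1/16}` -/
def hgap (E : ℕ) : ℕ := E.sqrt.sqrt.sqrt.sqrt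

/-- a "good" eigenvalue: lattice points on the circle of radius `√E` are `hgap E`-separated. -/
def GoodE (E : ℕ) : Prop := ∀ k l : Fin 2 → ℤ, k 0 ^ 2 + k 1 ^ 2 = (E : ℤ) →
  l 0 ^ 2 + l 1 ^ 2 = (E : ℤ) → k ≠ l → (hgap E : ℤ) < |k 0 - l 0| + |k 1 - l 1|

lemma hgap_mono : Monotone hgap := fun _ _ h =>
  Nat.sqrt_le_sqrt (Nat.sqrt_le_sqrt (Nat.sqrt_le_sqrt (Nat.sqrt_le_sqrt h)))

lemma hgap_pow16 (m : ℕ) : hgap (m ^ 16) = m := by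
  unfold hgap
  rw [show m ^ 16 = (m ^ 8) ^ 2 by ring, Nat.sqrt_eq',
    show m ^ 8 = (m ^ 4) ^ 2 by ring, Nat.sqrt_eq',
    show m ^ 4 = (m ^ 2) ^ 2 by ring, Nat.sqrt_eq', Nat.sqrt_eq']

lemma hgap_tendsto : Filter.Tendsto hgap Filter.atTop Filter.atTop := by
  refine Filter.tendsto_atTop_atTop.2 fun b => ⟨b ^ 16, fun N hN => ?_⟩
  calc b = hgap (b ^ 16) := (hgap_pow16 b).symm
    _ ≤ hgap N := hgap_mono hN

lemma abs_le_sqrt {x : ℤ} {n : ℕ} (h : x ^ 2 ≤ (n : ℤ)) : |x| ≤ (n.sqrt : ℤ) := by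
  have h1 : x.natAbs * x.natAbs ≤ n := by
    have h2 : ((x.natAbs * x.natAbs : ℕ) : ℤ) ≤ (n : ℤ) := by
      rw [Int.natAbs_mul_self]; nlinarith
    exact_mod_cast h2
  have h3 := Nat.le_sqrt.2 h1
  calc |x| = (x.natAbs : ℤ) := (Int.abs_eq_natAbs x)
    _ ≤ (n.sqrt : ℤ) := by exact_mod_cast h3

/-- The set of "good" eigenvalues used in the main theorem. -/
def Sgood : Set ℕ := {E | E ∈ sumTwoSquares ∧ GoodE E}

end Aux

/-- counting bad eigenvalues -/
lemma bad_count (N : ℕ) :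
    {E : ℕ | E ∈ Set.Icc 1 N ∧ ¬ GoodE E}.ncard
      ≤ (2 * hgap N + 1) * ((2 * hgap N + 1) * (2 * (2 * N.sqrt * hgap N) + 1)) := by
  classical
  set M : ℤ := (hgap N : ℤ) with hM
  set K : ℤ := ((2 * N.sqrt * hgap N : ℕ) : ℤ) with hK
  set Bad := {E : ℕ | E ∈ Set.Icc 1 N ∧ ¬ GoodE E} with hBad
  have hwit : ∀ E ∈ Bad, ∃ w : (Fin 2 → ℤ) × (Fin 2 → ℤ),
      w.1 0 ^ 2 + w.1 1 ^ 2 = (E : ℤ) ∧ w.2 0 ^ 2 + w.2 1 ^ 2 = (E : ℤ) ∧ w.1 ≠ w.2 ∧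
      |w.1 0 - w.2 0| + |w.1 1 - w.2 1| ≤ (hgap E : ℤ) := by
    rintro E ⟨-, hbad⟩
    unfold GoodE at hbad
    push_neg at hbad
    obtain ⟨k, l, hk, hl, hkl, hle⟩ := hbad
    exact ⟨(k, l), hk, hl, hkl, hle⟩
  choose! w hw1 hw2 hwne hwgap using hwit
  set box : Finset (ℤ × ℤ × ℤ) :=
    Finset.Icc (-M) M ×ˢ Finset.Icc (-M) M ×ˢ Finset.Icc (-K) K with hbox
  have hcard : box.card = (2 * hgap N + 1) * ((2 * hgap N + 1) * (2 * (2 * N.sqrt * hgap N) + 1)) := by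
    have e1 : (M + 1 - -M).toNat = 2 * hgap N + 1 := by rw [hM]; omega
    have e2 : (K + 1 - -K).toNat = 2 * (2 * N.sqrt * hgap N) + 1 := by rw [hK]; omega
    rw [hbox]
    simp only [Finset.card_product, Int.card_Icc, e1, e2]
  have key : Bad.ncard ≤ (box : Set (ℤ × ℤ × ℤ)).ncard := by
    refine Set.ncard_le_ncard_of_injOn
      (fun E => ((w E).1 0 - (w E).2 0, (w E).1 1 - (w E).2 1,
        (w E).1 0 * ((w E).1 1 - (w E).2 1) - (w E).1 1 * ((w E).1 0 - (w E).2 0)))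
      ?_ ?_ (box : Set (ℤ × ℤ × ℤ)).toFinite
    · -- maps into box
      intro E hE
      obtain ⟨k, l⟩ : True := trivial
      have h1 := hw1 E hE
      have h2 := hw2 E hE
      have hgapE := hwgap E hE
      have hIcc : E ∈ Set.Icc 1 N := hE.1
      have hEN : E ≤ N := hIcc.2
      have hMbound : (hgap E : ℤ) ≤ M := by rw [hM]; exact_mod_cast hgap_mono hEN
      have ha0 : |(w E).1 0| ≤ (N.sqrt : ℤ) := by
        refine abs_le_sqrt ?_
        have : ((E : ℕ) : ℤ) ≤ ((N : ℕ) : ℤ) := by exact_mod_cast hEN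
        nlinarith [sq_nonneg ((w E).1 1)]
      have ha1 : |(w E).1 1| ≤ (N.sqrt : ℤ) := by
        refine abs_le_sqrt ?_
        have : ((E : ℕ) : ℤ) ≤ ((N : ℕ) : ℤ) := by exact_mod_cast hEN
        nlinarith [sq_nonneg ((w E).1 0)]
      have hn0 : |(w E).1 0 - (w E).2 0| ≤ M :=
        le_trans (by nlinarith [abs_nonneg ((w E).1 1 - (w E).2 1)]) (le_trans hgapE hMbound)
      have hn1 : |(w E).1 1 - (w E).2 1| ≤ M :=
        le_trans (by nlinarith [abs_nonneg ((w E).1 0 - (w E).2 0)]) (le_trans hgapE hMbound)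
      have hs : |(w E).1 0 * ((w E).1 1 - (w E).2 1) - (w E).1 1 * ((w E).1 0 - (w E).2 0)| ≤ K := by
        have habs := abs_sub (((w E).1 0) * ((w E).1 1 - (w E).2 1)) (((w E).1 1) * ((w E).1 0 - (w E).2 0))
        have e1 : |(w E).1 0 * ((w E).1 1 - (w E).2 1)| ≤ (N.sqrt : ℤ) * M := by
          rw [abs_mul]
          exact mul_le_mul ha0 hn1 (abs_nonneg _) (by positivity)
        have e2 : |(w E).1 1 * ((w E).1 0 - (w E).2 0)| ≤ (N.sqrt : ℤ) * M := by
          rw [abs_mul]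
          exact mul_le_mul ha1 hn0 (abs_nonneg _) (by positivity)
        have : K = 2 * ((N.sqrt : ℤ) * M) := by rw [hK, hM]; push_cast; ring
        rw [this]
        calc |(w E).1 0 * ((w E).1 1 - (w E).2 1) - (w E).1 1 * ((w E).1 0 - (w E).2 0)|
            ≤ |(w E).1 0 * ((w E).1 1 - (w E).2 1)| + |(w E).1 1 * ((w E).1 0 - (w E).2 0)| :=
              abs_sub _ _
          _ ≤ 2 * ((N.sqrt : ℤ) * M) := by linarith
      simp only [hbox, Finset.coe_product, Set.mem_prod, Finset.mem_coe, Finset.mem_Icc]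
      refine ⟨?_, ?_, ?_⟩
      · constructor <;> [exact neg_le_of_abs_le hn0; exact le_of_abs_le hn0]
      · constructor <;> [exact neg_le_of_abs_le hn1; exact le_of_abs_le hn1]
      · constructor <;> [exact neg_le_of_abs_le hs; exact le_of_abs_le hs]
    · -- injective
      intro E hE E' hE' heq
      simp only [Prod.mk.injEq] at heq
      obtain ⟨q0, q1, q2⟩ := heq
      have h1 := hw1 E hE; have h2 := hw2 E hE
      have h1' := hw1 E' hE'; have h2' := hw2 E' hE'
      have lin : 2 * ((w E).1 0 * ((w E).1 0 - (w E).2 0) + (w E).1 1 * ((w E).1 1 - (w E).2 1))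
          = ((w E).1 0 - (w E).2 0) ^ 2 + ((w E).1 1 - (w E).2 1) ^ 2 := by
        linear_combination h1 - h2
      have lin' : 2 * ((w E').1 0 * ((w E).1 0 - (w E).2 0) + (w E').1 1 * ((w E).1 1 - (w E).2 1))
          = ((w E).1 0 - (w E).2 0) ^ 2 + ((w E).1 1 - (w E).2 1) ^ 2 := by
        linear_combination h1' - h2' +
          (2 * (w E').1 0 - ((w E).1 0 - (w E).2 0) - ((w E').1 0 - (w E').2 0)) * q0 +
          (2 * (w E').1 1 - ((w E).1 1 - (w E).2 1) - ((w E').1 1 - (w E').2 1)) * q1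
      have cross : (w E).1 0 * ((w E).1 1 - (w E).2 1) - (w E).1 1 * ((w E).1 0 - (w E).2 0)
          = (w E').1 0 * ((w E).1 1 - (w E).2 1) - (w E').1 1 * ((w E).1 0 - (w E).2 0) := by
        linear_combination q2 - (w E').1 0 * q1 + (w E').1 1 * q0
      have hnne : ((w E).1 0 - (w E).2 0) ≠ 0 ∨ ((w E).1 1 - (w E).2 1) ≠ 0 := by
        by_contra hcon
        push_neg at hcon
        apply hwne E hE
        funext i
        fin_cases i
        · show (w E).1 0 = (w E).2 0; omega
        · show (w E).1 1 = (w E).2 1; omega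
      have hpos : 0 < ((w E).1 0 - (w E).2 0) ^ 2 + ((w E).1 1 - (w E).2 1) ^ 2 := by
        rcases hnne with h | h
        · have := sq_nonneg ((w E).1 1 - (w E).2 1); positivity
        · have := sq_nonneg ((w E).1 0 - (w E).2 0); positivity
      have d0 : (w E).1 0 = (w E').1 0 := by
        have hk : ((w E).1 0 - (w E').1 0) *
            (2 * (((w E).1 0 - (w E).2 0) ^ 2 + ((w E).1 1 - (w E).2 1) ^ 2)) = 0 := by
          linear_combination ((w E).1 0 - (w E).2 0) * lin - ((w E).1 0 - (w E).2 0) * lin' +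
            2 * ((w E).1 1 - (w E).2 1) * cross
        rcases mul_eq_zero.1 hk with h | h
        · linarith
        · exfalso; linarith
      have d1 : (w E).1 1 = (w E').1 1 := by
        have hk : ((w E).1 1 - (w E').1 1) *
            (2 * (((w E).1 0 - (w E).2 0) ^ 2 + ((w E).1 1 - (w E).2 1) ^ 2)) = 0 := by
          linear_combination ((w E).1 1 - (w E).2 1) * lin - ((w E).1 1 - (w E).2 1) * lin' -
            2 * ((w E).1 0 - (w E).2 0) * cross
        rcases mul_eq_zero.1 hk with h | h
        · linarith
        · exfalso; linarith
      have : (E : ℤ) = (E' : ℤ) := by rw [← h1, ← h1', d0, d1]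
      exact_mod_cast this
  calc Bad.ncard ≤ (box : Set (ℤ × ℤ × ℤ)).ncard := key
    _ = box.card := Set.ncard_coe_finset box
    _ = _ := hcard

lemma total_lower (N : ℕ) (hN : 16 ≤ N) :
    (N.sqrt - N.sqrt / 2) * (N.sqrt.sqrt / 2 + 1) ≤ (sumTwoSquares ∩ Set.Icc 1 N).ncard := by
  classical
  set B := N.sqrt with hB
  set q := B.sqrt with hq
  have hB4 : 4 ≤ B := Nat.le_sqrt.2 (by omega)
  have hq2 : 2 ≤ q := Nat.le_sqrt.2 (by omega)
  set D : Finset (ℕ × ℕ) := Finset.Ico (B / 2) B ×ˢ Finset.range (q / 2 + 1) with hD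
  have hmaps : ∀ p ∈ D, p.1 * p.1 + p.2 * p.2 ∈ sumTwoSquares ∩ Set.Icc 1 N := by
    rintro ⟨b, a⟩ hp
    simp only [hD, Finset.mem_product, Finset.mem_Ico, Finset.mem_range] at hp
    obtain ⟨⟨hb1, hb2⟩, ha⟩ := hp
    dsimp only
    have haq : a ≤ q / 2 := by omega
    have haa : a * a ≤ b := by
      calc a * a ≤ (q / 2) * (q / 2) := Nat.mul_le_mul haq haq
        _ ≤ q * q / 4 := by
            have := Nat.div_mul_div_le q 2 q 2
            simpa using this
        _ ≤ B / 4 := Nat.div_le_div_right (Nat.sqrt_le B)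
        _ ≤ B / 2 := Nat.div_le_div_left (by norm_num) (by norm_num)
        _ ≤ b := hb1
    constructor
    · exact ⟨b, a, by push_cast; ring⟩
    · constructor
      · have : 1 ≤ b := by omega
        nlinarith
      · have h1 : b * b + a * a < (b + 1) * (b + 1) := by nlinarith
        have h2 : (b + 1) * (b + 1) ≤ B * B := Nat.mul_le_mul (by omega) (by omega)
        have h3 : B * B ≤ N := Nat.sqrt_le N
        omega
  have hinj : Set.InjOn (fun p : ℕ × ℕ => p.1 * p.1 + p.2 * p.2) ↑D := by
    rintro ⟨b, a⟩ hp ⟨b', a'⟩ hp' heq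
    simp only [hD, Finset.coe_product, Set.mem_prod, Finset.mem_coe, Finset.mem_Ico,
      Finset.mem_range] at hp hp'
    simp only at heq
    have hab : ∀ b₀ a₀ : ℕ, b₀ ∈ Finset.Ico (B / 2) B → a₀ < q / 2 + 1 →
        Nat.sqrt (b₀ * b₀ + a₀ * a₀) = b₀ := by
      intro b₀ a₀ hb₀ ha₀
      simp only [Finset.mem_Ico] at hb₀
      have haa : a₀ * a₀ ≤ b₀ := by
        calc a₀ * a₀ ≤ (q / 2) * (q / 2) := Nat.mul_le_mul (by omega) (by omega)
          _ ≤ q * q / 4 := by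
              have := Nat.div_mul_div_le q 2 q 2
              simpa using this
          _ ≤ B / 4 := Nat.div_le_div_right (Nat.sqrt_le B)
          _ ≤ B / 2 := Nat.div_le_div_left (by norm_num) (by norm_num)
          _ ≤ b₀ := hb₀.1
      refine le_antisymm ?_ ?_
      · have : b₀ * b₀ + a₀ * a₀ < (b₀ + 1) * (b₀ + 1) := by nlinarith
        exact Nat.le_of_lt_succ (Nat.sqrt_lt.2 this)
      · exact Nat.le_sqrt.2 (by omega)
    have hb : b = b' := by
      have e1 := hab b a (by simp [Finset.mem_Ico]; omega) (by omega)
      have e2 := hab b' a' (by simp [Finset.mem_Ico]; omega) (by omega)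
      rw [← e1, ← e2, heq]
    subst hb
    have : a = a' := Nat.mul_self_inj.1 (by omega)
    simp_all
  have hcard : D.card = (B - B / 2) * (q / 2 + 1) := by
    rw [hD, Finset.card_product, Nat.card_Ico, Finset.card_range]
  calc (B - B / 2) * (q / 2 + 1) = D.card := hcard.symm
    _ = (↑D : Set (ℕ × ℕ)).ncard := (Set.ncard_coe_finset D).symm
    _ ≤ (sumTwoSquares ∩ Set.Icc 1 N).ncard :=
        Set.ncard_le_ncard_of_injOn _ (fun p hp => hmaps p hp) hinj
          ((Set.finite_Icc 1 N).inter_of_right _)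

lemma Sgood_density :
    Filter.Tendsto (fun N : ℕ =>
        (Set.ncard (Sgood ∩ Set.Icc 1 N) : ℝ) / (Set.ncard (sumTwoSquares ∩ Set.Icc 1 N) : ℝ))
      Filter.atTop (nhds 1) := by
  have hMtop : Filter.Tendsto (fun N : ℕ => (hgap N : ℝ)) Filter.atTop Filter.atTop :=
    tendsto_natCast_atTop_atTop.comp hgap_tendsto
  have hlow : Filter.Tendsto (fun N : ℕ => 1 - 180 / (hgap N : ℝ)) Filter.atTop (nhds 1) := by
    have h0 : Filter.Tendsto (fun N : ℕ => 180 / (hgap N : ℝ)) Filter.atTop (nhds 0) :=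
      Filter.Tendsto.div_atTop tendsto_const_nhds hMtop
    simpa using tendsto_const_nhds.sub h0
  refine tendsto_of_tendsto_of_tendsto_of_le_of_le' hlow tendsto_const_nhds ?_ ?_
  · -- eventual lower bound
    filter_upwards [Filter.eventually_ge_atTop 65536] with N hN
    set B := N.sqrt with hB
    set q := B.sqrt with hq
    set M := hgap N with hM
    have hB4 : 4 ≤ B := Nat.le_sqrt.2 (by omega)
    have hq2 : 2 ≤ q := Nat.le_sqrt.2 (by omega)
    have hM1 : 1 ≤ M := by
      rw [hM]; show 1 ≤ q.sqrt.sqrt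
      have : 1 ≤ q.sqrt := Nat.le_sqrt.2 (by omega)
      exact Nat.le_sqrt.2 (by omega)
    set bad := {E : ℕ | E ∈ Set.Icc 1 N ∧ ¬ GoodE E}.ncard with hbad
    set good := (Sgood ∩ Set.Icc 1 N).ncard with hgood
    set total := (sumTwoSquares ∩ Set.Icc 1 N).ncard with htotal
    have hM4 : M ^ 4 ≤ q := by
      have h1 : q.sqrt.sqrt * q.sqrt.sqrt ≤ q.sqrt := Nat.sqrt_le _
      have h2 : q.sqrt * q.sqrt ≤ q := Nat.sqrt_le _
      calc M ^ 4 = (q.sqrt.sqrt * q.sqrt.sqrt) * (q.sqrt.sqrt * q.sqrt.sqrt) := by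
            show hgap N ^ 4 = _
            unfold hgap
            rw [← hB, ← hq]; ring
        _ ≤ q.sqrt * q.sqrt := Nat.mul_le_mul h1 h1
        _ ≤ q := h2
    have hbadle : bad ≤ 45 * M ^ 3 * B := by
      calc bad ≤ (2 * M + 1) * ((2 * M + 1) * (2 * (2 * B * M) + 1)) := bad_count N
        _ ≤ (3 * M) * ((3 * M) * (5 * (B * M))) := by
            refine Nat.mul_le_mul (by omega) (Nat.mul_le_mul (by omega) ?_)
            nlinarith
        _ = 45 * M ^ 3 * B := by ring
    have hLle : (B - B / 2) * (q / 2 + 1) ≤ total := total_lower N (by omega)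
    have hL1 : 1 ≤ (B - B / 2) * (q / 2 + 1) := by
      have : 1 ≤ B - B / 2 := by omega
      exact Nat.one_le_iff_ne_zero.2 (by positivity)
    have htotal1 : 1 ≤ total := le_trans hL1 hLle
    have hkey : bad * M ≤ 180 * total := by
      have h1 : bad * M ≤ 45 * M ^ 4 * B := by
        calc bad * M ≤ (45 * M ^ 3 * B) * M := Nat.mul_le_mul_right M hbadle
          _ = 45 * M ^ 4 * B := by ring
      have h2 : 45 * M ^ 4 * B ≤ 45 * q * B := by
        have := Nat.mul_le_mul_right B (Nat.mul_le_mul_left 45 hM4)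
        linarith
      have h3 : q * B ≤ 4 * ((B - B / 2) * (q / 2 + 1)) := by
        have e1 : B ≤ 2 * (B - B / 2) := by omega
        have e2 : q ≤ 2 * (q / 2 + 1) := by omega
        calc q * B ≤ (2 * (q / 2 + 1)) * (2 * (B - B / 2)) := Nat.mul_le_mul e2 e1
          _ = 4 * ((B - B / 2) * (q / 2 + 1)) := by ring
      calc bad * M ≤ 45 * q * B := le_trans h1 h2
        _ = 45 * (q * B) := by ring
        _ ≤ 45 * (4 * ((B - B / 2) * (q / 2 + 1))) := Nat.mul_le_mul_left 45 h3
        _ = 180 * ((B - B / 2) * (q / 2 + 1)) := by ring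
        _ ≤ 180 * total := Nat.mul_le_mul_left 180 hLle
    have hcover : total ≤ good + bad := by
      have hsub : sumTwoSquares ∩ Set.Icc 1 N ⊆
          (Sgood ∩ Set.Icc 1 N) ∪ {E : ℕ | E ∈ Set.Icc 1 N ∧ ¬ GoodE E} := by
        rintro E ⟨hEσ, hEI⟩
        by_cases hg : GoodE E
        · exact Or.inl ⟨⟨hEσ, hg⟩, hEI⟩
        · exact Or.inr ⟨hEI, hg⟩
      calc total ≤ ((Sgood ∩ Set.Icc 1 N) ∪ {E : ℕ | E ∈ Set.Icc 1 N ∧ ¬ GoodE E}).ncard :=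
            Set.ncard_le_ncard hsub (Set.Finite.union
              ((Set.finite_Icc 1 N).inter_of_right _)
              ((Set.finite_Icc 1 N).subset (fun E hE => hE.1)))
        _ ≤ good + bad := Set.ncard_union_le _ _
    -- real arithmetic
    have hM0R : (0:ℝ) < (M:ℝ) := by exact_mod_cast hM1
    have htotal0R : (0:ℝ) < (total:ℝ) := by exact_mod_cast htotal1
    have hkeyR : (bad:ℝ) * M ≤ 180 * total := by exact_mod_cast hkey
    have hcoverR : (total:ℝ) ≤ good + bad := by exact_mod_cast hcover
    have hbadR : (bad:ℝ) ≤ 180 / M * total := by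
      rw [div_mul_eq_mul_div, le_div_iff₀ hM0R]
      linarith
    rw [le_div_iff₀ htotal0R]
    nlinarith
  · -- eventual upper bound
    filter_upwards [Filter.eventually_ge_atTop 65536] with N hN
    have htotal1 : 1 ≤ (sumTwoSquares ∩ Set.Icc 1 N).ncard := by
      refine le_trans ?_ (total_lower N (by omega))
      have hB4 : 4 ≤ N.sqrt := Nat.le_sqrt.2 (by omega)
      have : 1 ≤ N.sqrt - N.sqrt / 2 := by omega
      exact Nat.one_le_iff_ne_zero.2 (by positivity)
    have h0 : (0:ℝ) < ((sumTwoSquares ∩ Set.Icc 1 N).ncard : ℝ) := by exact_mod_cast htotal1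
    rw [div_le_one h0]
    have : (Sgood ∩ Set.Icc 1 N).ncard ≤ (sumTwoSquares ∩ Set.Icc 1 N).ncard :=
      Set.ncard_le_ncard (fun E hE => ⟨hE.1.1, hE.2⟩) ((Set.finite_Icc 1 N).inter_of_right _)
    exact_mod_cast this

/-- along a relative density-one set of eigenvalues, *all* eigenfunctions
equidistribute on `𝕋²`. -/
theorem statement14 :
    ∃ S : Set ℕ, S ⊆ sumTwoSquares ∧
      Filter.Tendsto (fun N : ℕ =>
          (Set.ncard (S ∩ Set.Icc 1 N) : ℝ) / (Set.ncard (sumTwoSquares ∩ Set.Icc 1 N) : ℝ))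
        Filter.atTop (nhds 1) ∧
      ∀ a : Td 2 → ℂ, Continuous a → ∀ ε : ℝ, 0 < ε → ∃ Λ : ℝ, 0 < Λ ∧
        ∀ E ∈ S, Λ ≤ (E : ℝ) →
          ∀ (ψ : Td 2 → ℂ) (c : (Fin 2 → ℤ) → ℂ),
            (∀ k, c k ≠ 0 → znorm k ^ 2 = E) →
            (∀ x, ψ x = ∑' k : Fin 2 → ℤ, c k * eChar k x) →
            (∑' k : Fin 2 → ℤ, ‖c k‖ ^ 2 = 1) →
            ‖(∫ x, a x * ((‖ψ x‖ ^ 2 : ℝ) : ℂ) ∂(haarT 2)) - ∫ x, a x ∂(haarT 2)‖ < ε := by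
  classical
  refine ⟨Sgood, fun E hE => hE.1, Sgood_density, ?_⟩
  intro a ha ε hε
  -- trigonometric approximation
  obtain ⟨p, hp⟩ := exists_trig_approx a ha (by positivity : (0:ℝ) < ε / 3)
  set F := p.support with hF
  set Mbig : ℕ := F.sup (fun n => (|n 0| + |n 1|).toNat) with hMbig
  refine ⟨(((Mbig + 1) ^ 16 : ℕ) : ℝ), by positivity, ?_⟩
  intro E hES hEΛ ψ c hc hψ hnorm
  have hEΛ' : (Mbig + 1) ^ 16 ≤ E := by exact_mod_cast hEΛ
  have hgapE : Mbig + 1 ≤ hgap E := by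
    calc Mbig + 1 = hgap ((Mbig + 1) ^ 16) := (hgap_pow16 (Mbig + 1)).symm
      _ ≤ hgap E := hgap_mono hEΛ'
  have hGood : GoodE E := hES.2
  -- the circle constraint on the support of c
  have hcirc : ∀ k : Fin 2 → ℤ, c k ≠ 0 → k 0 ^ 2 + k 1 ^ 2 = (E : ℤ) := by
    intro k hk
    have h := hc k hk
    have h2 : ((k 0 : ℝ)) ^ 2 + ((k 1 : ℝ)) ^ 2 = (E : ℝ) := by
      rw [← h]
      unfold znorm
      rw [sq_sqrt (by positivity), Fin.sum_univ_two]
    exact_mod_cast h2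
  -- c has finite support
  have hfin : {k : Fin 2 → ℤ | c k ≠ 0}.Finite := by
    refine Set.Finite.subset (Set.Finite.pi
      (fun _ : Fin 2 => Set.finite_Icc (-(E:ℤ)) (E:ℤ))) ?_
    intro k hk
    have h := hcirc k hk
    intro i _
    have hsq : (k i) ^ 2 ≤ (E : ℤ) := by
      fin_cases i
      · show (k 0) ^ 2 ≤ (E : ℤ); nlinarith [sq_nonneg (k 1)]
      · show (k 1) ^ 2 ≤ (E : ℤ); nlinarith [sq_nonneg (k 0)]
    have habs := abs_le_sqrt hsq
    have hsE : (E.sqrt : ℤ) ≤ (E : ℤ) := by exact_mod_cast Nat.sqrt_le_self E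
    have habs2 := abs_le.1 (habs.trans hsE)
    simp only [Set.mem_Icc]
    exact habs2
  set t : Finset (Fin 2 → ℤ) := hfin.toFinset with ht
  have hmem : ∀ k, k ∈ t ↔ c k ≠ 0 := fun k => hfin.mem_toFinset
  have hψF : ∀ x, ψ x = ∑ k ∈ t, c k * eChar k x := by
    intro x
    rw [hψ x]
    exact tsum_eq_sum fun k hk => by
      rw [not_not.1 fun h => hk ((hmem k).2 h), zero_mul]
  have hnormF : ∑ k ∈ t, ‖c k‖ ^ 2 = 1 := by
    rw [← hnorm]
    exact (tsum_eq_sum fun k hk => by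
      rw [not_not.1 fun h => hk ((hmem k).2 h), norm_zero]; norm_num).symm
  have hψcont : Continuous ψ := by
    rw [show ψ = fun x => ∑ k ∈ t, c k * eChar k x from funext hψF]
    exact continuous_finset_sum _ fun k _ => continuous_const.mul (continuous_eChar k)
  set X : Td 2 → ℂ := fun x => ((‖ψ x‖ ^ 2 : ℝ) : ℂ) with hX
  have hXcont : Continuous X :=
    Complex.continuous_ofReal.comp ((hψcont.norm).pow 2)
  have hznorm : ∀ z : ℂ, ((‖z‖ ^ 2 : ℝ) : ℂ) = z * conj z := by
    intro z
    rw [Complex.mul_conj]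
    congr 1
    rw [Complex.normSq_eq_norm_sq]
  have hXeq : ∀ x, X x = ψ x * conj (ψ x) := by
    intro x
    simp only [hX]
    exact hznorm (ψ x)
  have hcont3 : ∀ m k l : Fin 2 → ℤ,
      Continuous fun x : Td 2 => (c k * conj (c l)) * (eChar m x * (eChar k x * conj (eChar l x))) :=
    fun m k l => continuous_const.mul ((continuous_eChar m).mul ((continuous_eChar k).mul
      (Complex.continuous_conj.comp (continuous_eChar l))))
  -- the key Fourier computation
  have hJ : ∀ n : Fin 2 → ℤ, (∫ x, eChar n x * X x ∂(haarT 2))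
      = ∑ k ∈ t, ∑ l ∈ t, (c k * conj (c l)) * (if n + k - l = 0 then 1 else 0) := by
    intro n
    have hpt : ∀ x, eChar n x * X x
        = ∑ k ∈ t, ∑ l ∈ t, (c k * conj (c l)) * (eChar n x * (eChar k x * conj (eChar l x))) := by
      intro x
      rw [hXeq x, hψF x, map_sum, Finset.sum_mul_sum, Finset.mul_sum]
      refine Finset.sum_congr rfl fun k _ => ?_
      rw [Finset.mul_sum]
      refine Finset.sum_congr rfl fun l _ => ?_
      rw [map_mul]
      ring
    rw [integral_congr_ae (Filter.Eventually.of_forall hpt)]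
    rw [integral_finset_sum _ (fun k _ => integrable_of_continuous
      (continuous_finset_sum _ fun l _ => hcont3 n k l))]
    refine Finset.sum_congr rfl fun k _ => ?_
    rw [integral_finset_sum _ (fun l _ => integrable_of_continuous (hcont3 n k l))]
    refine Finset.sum_congr rfl fun l _ => ?_
    rw [integral_const_mul, integral_echar3]
  have hJ' : ∀ n : Fin 2 → ℤ, (n = 0 ∨ n ∈ F) → (∫ x, eChar n x * X x ∂(haarT 2))
      = if n = 0 then 1 else 0 := by
    intro n hn
    rw [hJ n]
    by_cases hn0 : n = 0
    · subst hn0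
      rw [if_pos rfl]
      have hterm : ∀ k ∈ t, ∑ l ∈ t, (c k * conj (c l)) * (if 0 + k - l = 0 then 1 else 0)
          = ((‖c k‖ ^ 2 : ℝ) : ℂ) := by
        intro k hk
        have hterm2 : ∀ l ∈ t, (c k * conj (c l)) * (if 0 + k - l = 0 then 1 else 0)
            = if l = k then c k * conj (c l) else 0 := by
          intro l _
          by_cases hlk : l = k
          · subst hlk; simp
          · rw [if_neg hlk, if_neg (by
              intro hcon
              apply hlk
              have h5 : l = 0 + k - (0 + k - l) := by ring
              rw [h5, hcon]; ring), mul_zero]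
        rw [Finset.sum_congr rfl hterm2, Finset.sum_ite_eq' t k (fun l => c k * conj (c l)),
          if_pos hk]
        exact (hznorm (c k)).symm
      rw [Finset.sum_congr rfl hterm, ← Complex.ofReal_sum, hnormF]
      norm_num
    · rw [if_neg hn0]
      have hnF : n ∈ F := hn.resolve_left hn0
      refine Finset.sum_eq_zero fun k hk => Finset.sum_eq_zero fun l hl => ?_
      by_cases h0 : n + k - l = 0
      · rw [if_pos h0, mul_one]
        by_cases hck : c k = 0
        · rw [hck, zero_mul]
        by_cases hcl : c l = 0
        · rw [hcl, map_zero, mul_zero]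
        exfalso
        have hkc := hcirc k hck
        have hlc := hcirc l hcl
        have hkl : k ≠ l := by
          intro hcon
          apply hn0
          have h5 : n = n + k - l := by rw [hcon]; ring
          rw [h5, h0]
        have hgap1 := hGood k l hkc hlc hkl
        have hnk : l = n + k := by
          have h5 : l = n + k - (n + k - l) := by ring
          rw [h5, h0]; ring
        have hl0 : l 0 = n 0 + k 0 := by rw [hnk]; rfl
        have hl1 : l 1 = n 1 + k 1 := by rw [hnk]; rfl
        have habs0 : |k 0 - l 0| = |n 0| := by rw [show k 0 - l 0 = -(n 0) by rw [hl0]; ring, abs_neg]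
        have habs1 : |k 1 - l 1| = |n 1| := by rw [show k 1 - l 1 = -(n 1) by rw [hl1]; ring, abs_neg]
        have hsup : (|n 0| + |n 1|).toNat ≤ Mbig :=
          Finset.le_sup (f := fun n : Fin 2 → ℤ => (|n 0| + |n 1|).toNat) hnF
        have habs : |n 0| + |n 1| ≤ (Mbig : ℤ) := Int.toNat_le.1 hsup
        have hgapEZ : ((Mbig : ℤ) + 1) ≤ (hgap E : ℤ) := by exact_mod_cast hgapE
        rw [habs0, habs1] at hgap1
        linarith
      · rw [if_neg h0, mul_zero]
  -- `∫ ‖ψ‖² = 1`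
  have hX1 : (∫ x, X x ∂(haarT 2)) = 1 := by
    have h := hJ' 0 (Or.inl rfl)
    rw [if_pos rfl] at h
    rw [← h]
    refine integral_congr_ae (Filter.Eventually.of_forall fun x => ?_)
    show X x = eChar 0 x * X x
    rw [eChar_zero, one_mul]
  have hXR1 : (∫ x, ‖ψ x‖ ^ 2 ∂(haarT 2)) = 1 := by
    have h2 : ((∫ x, ‖ψ x‖ ^ 2 ∂(haarT 2) : ℝ) : ℂ) = 1 :=
      (integral_ofReal (𝕜 := ℂ) (f := fun x => ‖ψ x‖ ^ 2) (μ := haarT 2)).symm.trans hX1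
    exact_mod_cast h2
  -- the trigonometric polynomial
  set P : Td 2 → ℂ := fun x => ∑ n ∈ F, p n * eChar n x with hP
  have hPcont : Continuous P :=
    continuous_finset_sum _ fun n _ => continuous_const.mul (continuous_eChar n)
  have hPX : (∫ x, P x * X x ∂(haarT 2)) = ∫ x, P x ∂(haarT 2) := by
    have hl : (∫ x, P x * X x ∂(haarT 2))
        = ∑ n ∈ F, p n * (if n = 0 then 1 else 0) := by
      have hpt : ∀ x, P x * X x = ∑ n ∈ F, p n * (eChar n x * X x) := by
        intro x
        rw [hP]
        rw [Finset.sum_mul]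
        exact Finset.sum_congr rfl fun n _ => by ring
      rw [integral_congr_ae (Filter.Eventually.of_forall hpt)]
      rw [integral_finset_sum _ (f := fun n x => p n * (eChar n x * X x)) (fun n _ => integrable_of_continuous
        (continuous_const.mul ((continuous_eChar n).mul hXcont)))]
      refine Finset.sum_congr rfl fun n hn => ?_
      rw [integral_const_mul, hJ' n (Or.inr hn)]
    have hr : (∫ x, P x ∂(haarT 2)) = ∑ n ∈ F, p n * (if n = 0 then 1 else 0) := by
      rw [hP]
      rw [integral_finset_sum _ (f := fun n x => p n * eChar n x) (fun n _ => integrable_of_continuous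
        (continuous_const.mul (continuous_eChar n)))]
      exact Finset.sum_congr rfl fun n _ => by rw [integral_const_mul, integral_eChar]
    rw [hl, hr]
  -- integrability facts
  have hint_aX : Integrable (fun x => a x * X x) (haarT 2) :=
    integrable_of_continuous (ha.mul hXcont)
  have hint_PX : Integrable (fun x => P x * X x) (haarT 2) :=
    integrable_of_continuous (hPcont.mul hXcont)
  have hint_a : Integrable a (haarT 2) := integrable_of_continuous ha
  have hint_P : Integrable P (haarT 2) := integrable_of_continuous hPcont
  -- splitting
  have hsplit : (∫ x, a x * X x ∂(haarT 2)) - ∫ x, a x ∂(haarT 2)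
      = (∫ x, (a x - P x) * X x ∂(haarT 2)) + (∫ x, (P x - a x) ∂(haarT 2)) := by
    have h1 : (∫ x, (a x - P x) * X x ∂(haarT 2))
        = (∫ x, a x * X x ∂(haarT 2)) - ∫ x, P x * X x ∂(haarT 2) := by
      rw [← integral_sub hint_aX hint_PX]
      refine integral_congr_ae (Filter.Eventually.of_forall fun x => ?_)
      ring
    have h2 : (∫ x, (P x - a x) ∂(haarT 2))
        = (∫ x, P x ∂(haarT 2)) - ∫ x, a x ∂(haarT 2) := integral_sub hint_P hint_a
    rw [h1, h2, hPX]
    ring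
  -- norm bounds
  have hbound1 : ‖∫ x, (a x - P x) * X x ∂(haarT 2)‖ ≤ ε / 3 := by
    calc ‖∫ x, (a x - P x) * X x ∂(haarT 2)‖
        ≤ ∫ x, ‖(a x - P x) * X x‖ ∂(haarT 2) := norm_integral_le_integral_norm _
      _ ≤ ∫ x, (ε / 3) * ‖ψ x‖ ^ 2 ∂(haarT 2) := by
          refine integral_mono (integrable_of_continuous ((ha.sub hPcont).mul hXcont).norm)
            (integrable_of_continuous ((continuous_const.mul ((hψcont.norm).pow 2)) :
              Continuous fun x => (ε / 3) * ‖ψ x‖ ^ 2)) fun x => ?_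
          rw [norm_mul]
          have hXnorm : ‖X x‖ = ‖ψ x‖ ^ 2 := by
            simp only [hX]
            rw [Complex.norm_real]
            exact norm_of_nonneg (by positivity)
          rw [hXnorm]
          exact mul_le_mul_of_nonneg_right (le_of_lt (hp x)) (by positivity)
      _ = ε / 3 := by rw [integral_const_mul, hXR1, mul_one]
  have hbound2 : ‖∫ x, (P x - a x) ∂(haarT 2)‖ ≤ ε / 3 := by
    calc ‖∫ x, (P x - a x) ∂(haarT 2)‖
        ≤ ∫ x, ‖P x - a x‖ ∂(haarT 2) := norm_integral_le_integral_norm _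
      _ ≤ ∫ _x, (ε / 3) ∂(haarT 2) := by
          refine integral_mono (integrable_of_continuous (hPcont.sub ha).norm)
            (integrable_const _) fun x => ?_
          rw [norm_sub_rev]
          exact le_of_lt (hp x)
      _ = ε / 3 := by simp
  calc ‖(∫ x, a x * X x ∂(haarT 2)) - ∫ x, a x ∂(haarT 2)‖
      = ‖(∫ x, (a x - P x) * X x ∂(haarT 2)) + (∫ x, (P x - a x) ∂(haarT 2))‖ := by
        rw [hsplit]
    _ ≤ ‖∫ x, (a x - P x) * X x ∂(haarT 2)‖ + ‖∫ x, (P x - a x) ∂(haarT 2)‖ := norm_add_le _ _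
    _ ≤ ε / 3 + ε / 3 := add_le_add hbound1 hbound2
    _ < ε := by linarith
end
end
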